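/- arXiv:2203.04760 — 8 statements merged into one kernel-verified Lean document; each statement's English description precedes it below -/
import Mathlib

section
/- If 0 ≤ d ≤ k ≤ n - d and f is a function on the slice {x ∈ {0,1}^n : Σ x_i = k} expressible as a polynomial of degree at most d, then f can be written as a linear combination of monomials x_S = Π_{i∈S} x_i where every S has size exactly d. -/
/-- Hamming weight of a Boolean vector. -/
def wt {n : ℕ} (x : Fin n → Bool) : ℕ := (Finset.univ.filter (fun i => x i = true)).card

open Finset

lemma count_lemma {n : ℕ} (d : ℕ) (S A : Finset (Fin n)) (hSA : S ⊆ A) (hSd : S.card ≤ d) :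
    (Finset.univ.filter (fun T : Finset (Fin n) => (T.card = d ∧ S ⊆ T) ∧ T ⊆ A)).card
      = Nat.choose (A.card - S.card) (d - S.card) := by
  have h := Finset.card_powersetCard (d - S.card) (A \ S)
  rw [Finset.card_sdiff_of_subset hSA] at h
  rw [← h]
  apply Finset.card_bij' (fun T _ => T \ S) (fun U _ => U ∪ S)
  · intro T hT
    simp only [mem_filter, mem_univ, true_and] at hT
    obtain ⟨⟨hcard, hST⟩, hTA⟩ := hT
    simp only [mem_powersetCard]
    constructor
    · exact sdiff_subset_sdiff hTA (le_refl S)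
    · rw [Finset.card_sdiff_of_subset hST, hcard]
  · intro U hU
    simp only [mem_powersetCard] at hU
    obtain ⟨hUA, hUcard⟩ := hU
    have hdisj : Disjoint U S := by
      exact Finset.disjoint_of_subset_left hUA (Finset.sdiff_disjoint)
    simp only [mem_filter, mem_univ, true_and]
    refine ⟨⟨?_, Finset.subset_union_right⟩, ?_⟩
    · rw [Finset.card_union_of_disjoint hdisj, hUcard]
      omega
    · exact Finset.union_subset (hUA.trans (Finset.sdiff_subset)) hSA
  · intro T hT
    simp only [mem_filter, mem_univ, true_and] at hT
    exact Finset.sdiff_union_of_subset hT.1.2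
  · intro U hU
    simp only [mem_powersetCard] at hU
    have hdisj : Disjoint U S :=
      Finset.disjoint_of_subset_left hU.1 (Finset.sdiff_disjoint)
    exact Finset.union_sdiff_cancel_right hdisj

lemma key {n : ℕ} (k d : ℕ) (hdk : d ≤ k) (x : Fin n → Bool) (hx : wt x = k)
    (S : Finset (Fin n)) (hSd : S.card ≤ d) :
    ∏ i ∈ S, (if x i = true then (1:ℝ) else 0)
      = ((Nat.choose (k - S.card) (d - S.card) : ℝ))⁻¹ *
        ∑ T ∈ Finset.univ.filter (fun T : Finset (Fin n) => T.card = d ∧ S ⊆ T),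
          ∏ i ∈ T, (if x i = true then (1:ℝ) else 0) := by
  classical
  set A := Finset.univ.filter (fun i => x i = true) with hA
  have hAcard : A.card = k := hx
  have hprod : ∀ T : Finset (Fin n), (∏ i ∈ T, (if x i = true then (1:ℝ) else 0))
      = if T ⊆ A then 1 else 0 := by
    intro T
    rw [Finset.prod_boole]
    congr 1
    simp [hA, Finset.subset_iff]
  have hsum : (∑ T ∈ Finset.univ.filter (fun T : Finset (Fin n) => T.card = d ∧ S ⊆ T),
      ∏ i ∈ T, (if x i = true then (1:ℝ) else 0))
      = ((Finset.univ.filter (fun T : Finset (Fin n) => (T.card = d ∧ S ⊆ T) ∧ T ⊆ A)).card : ℝ) := by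
    rw [Finset.sum_congr rfl (fun T _ => hprod T), Finset.sum_boole, Finset.filter_filter]
  rw [hprod S, hsum]
  by_cases hSA : S ⊆ A
  · rw [if_pos hSA, count_lemma d S A hSA hSd, hAcard]
    have hpos : 0 < Nat.choose (k - S.card) (d - S.card) :=
      Nat.choose_pos (by omega)
    field_simp
  · rw [if_neg hSA]
    have : (Finset.univ.filter (fun T : Finset (Fin n) => (T.card = d ∧ S ⊆ T) ∧ T ⊆ A)) = ∅ := by
      apply Finset.filter_false_of_mem
      intro T _ hT
      exact hSA (hT.1.2.trans hT.2)
    rw [this]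
    simp

theorem stmt0 (n k d : ℕ) (hdk : d ≤ k) (hkn : k ≤ n - d)
    (f : (Fin n → Bool) → ℝ) (c : Finset (Fin n) → ℝ)
    (hf : ∀ x, wt x = k →
      f x = ∑ S ∈ Finset.univ.filter (fun S : Finset (Fin n) => S.card ≤ d),
        c S * ∏ i ∈ S, (if x i = true then (1:ℝ) else 0)) :
    ∃ c' : Finset (Fin n) → ℝ, ∀ x, wt x = k →
      f x = ∑ S ∈ Finset.univ.filter (fun S : Finset (Fin n) => S.card = d),
        c' S * ∏ i ∈ S, (if x i = true then (1:ℝ) else 0) := by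
  classical
  refine ⟨fun T => ∑ S ∈ Finset.univ.filter (fun S : Finset (Fin n) => S.card ≤ d ∧ S ⊆ T),
      c S * ((Nat.choose (k - S.card) (d - S.card) : ℝ))⁻¹, ?_⟩
  intro x hx
  rw [hf x hx]
  have step1 : ∀ S ∈ Finset.univ.filter (fun S : Finset (Fin n) => S.card ≤ d),
      c S * ∏ i ∈ S, (if x i = true then (1:ℝ) else 0)
      = ∑ T ∈ Finset.univ.filter (fun T : Finset (Fin n) => T.card = d),
          if S ⊆ T then (c S * ((Nat.choose (k - S.card) (d - S.card) : ℝ))⁻¹)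
            * ∏ i ∈ T, (if x i = true then (1:ℝ) else 0) else 0 := by
    intro S hS
    simp only [mem_filter, mem_univ, true_and] at hS
    rw [key k d hdk x hx S hS, ← Finset.sum_filter, Finset.filter_filter]
    simp only [Finset.mul_sum]
    exact Finset.sum_congr rfl (fun T _ => by ring)
  rw [Finset.sum_congr rfl step1, Finset.sum_comm]
  apply Finset.sum_congr rfl
  intro T _
  rw [← Finset.sum_filter, Finset.filter_filter, ← Finset.sum_mul]
end

section
/- Let f be a function on the slice binom([n],k), and suppose I, J are disjoint subsets of [n] such that for every i ∈ I and j ∈ J there exists x in the slice with f(x) ≠ f(x^{(i j)}), where x^{(i j)} swaps coordinates i and j. If f is an m-junta then m ≥ min(|I|, |J|). -/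
lemma wt_comp {n : ℕ} (x : Fin n → Bool) (e : Equiv.Perm (Fin n)) :
    wt (x ∘ e) = wt x := by
  unfold wt
  exact Finset.card_equiv e (by simp)

theorem stmt2 (n k m : ℕ) (f : (Fin n → Bool) → ℝ) (I J : Finset (Fin n))
    (hIJ : Disjoint I J)
    (hswap : ∀ i ∈ I, ∀ j ∈ J, ∃ x : Fin n → Bool, wt x = k ∧
      f x ≠ f (x ∘ Equiv.swap i j))
    (K : Finset (Fin n)) (hK : K.card ≤ m)
    (hjunta : ∀ x y : Fin n → Bool, wt x = k → wt y = k →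
      (∀ i ∈ K, x i = y i) → f x = f y) :
    min I.card J.card ≤ m := by
  have key : ∀ i ∈ I, ∀ j ∈ J, i ∈ K ∨ j ∈ K := by
    intro i hi j hj
    by_contra h
    push_neg at h
    obtain ⟨x, hx, hne⟩ := hswap i hi j hj
    apply hne
    apply hjunta x _ hx (by rw [wt_comp]; exact hx)
    intro l hl
    simp only [Function.comp_apply]
    rw [Equiv.swap_apply_of_ne_of_ne]
    · rintro rfl; exact h.1 hl
    · rintro rfl; exact h.2 hl
  by_cases hIK : I ⊆ K
  · exact le_trans (min_le_left _ _) (le_trans (Finset.card_le_card hIK) hK)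
  · obtain ⟨i, hi, hiK⟩ := Finset.not_subset.mp hIK
    have hJK : J ⊆ K := by
      intro j hj
      rcases key i hi j hj with h | h
      · exact absurd h hiK
      · exact h
    exact le_trans (min_le_right _ _) (le_trans (Finset.card_le_card hJK) hK)
end

section
/- For all parameters c, d ∈ ℕ and every k ≥ 1, there exists n ≥ 1 such that: whenever A and B are disjoint sets of size n and every d-element subset of A ∪ B is colored with one of c colors, there exist subsets A' ⊆ A and B' ⊆ B of size k and colors c_0, ..., c_d such that every d-element subset T of A' ∪ B' has color c_{|T ∩ A|}. -/
open Finset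

/-- Pigeonhole: shrink a set so that a coloring becomes constant, losing a factor
of at most the number of colors. -/
lemma pigeonC {C : Type} [DecidableEq C] [Fintype C] (g : ℕ → C) (S : Finset ℕ) :
    ∃ S', S' ⊆ S ∧ S.card ≤ Fintype.card C * S'.card ∧
      ∀ z ∈ S', ∀ w ∈ S', g z = g w := by
  haveI : Nonempty C := ⟨g 0⟩
  obtain ⟨y0, -, hy0⟩ := Finset.exists_mem_eq_sup (Finset.univ : Finset C)
    Finset.univ_nonempty (fun y => (S.filter (fun z => g z = y)).card)
  refine ⟨S.filter (fun z => g z = y0), filter_subset _ _, ?_, ?_⟩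
  · calc S.card = ∑ y ∈ Finset.univ, (S.filter (fun z => g z = y)).card :=
          card_eq_sum_card_fiberwise (fun x _ => mem_univ _)
    _ ≤ ∑ _y ∈ (Finset.univ : Finset C), (S.filter (fun z => g z = y0)).card := by
          refine Finset.sum_le_sum (fun y _ => ?_)
          have h := Finset.le_sup (f := fun y => (S.filter (fun z => g z = y)).card)
            (mem_univ y)
          rw [hy0] at h
          simpa using h
    _ = Fintype.card C * (S.filter (fun z => g z = y0)).card := by
          rw [Finset.sum_const, smul_eq_mul, Finset.card_univ]
  · intro z hz w hw
    rw [(mem_filter.mp hz).2, (mem_filter.mp hw).2]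

/-- Shrink a set so that, for every `D` in a family, the color of `insert z D`
does not depend on `z` in the set. -/
lemma shrinkC {C : Type} [DecidableEq C] [Fintype C] (χ : Finset ℕ → C)
    (𝒟 : Finset (Finset ℕ)) (S : Finset ℕ) :
    ∃ S', S' ⊆ S ∧ S.card ≤ Fintype.card C ^ 𝒟.card * S'.card ∧
      ∀ D ∈ 𝒟, ∀ z ∈ S', ∀ w ∈ S', χ (insert z D) = χ (insert w D) := by
  induction 𝒟 using Finset.induction_on with
  | empty => exact ⟨S, Subset.rfl, by simp, by simp⟩
  | @insert D 𝒟 hD IH =>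
    obtain ⟨S₁, hS₁sub, hS₁card, hS₁⟩ := IH
    obtain ⟨S₂, hS₂sub, hS₂card, hS₂⟩ := pigeonC (fun z => χ (insert z D)) S₁
    refine ⟨S₂, hS₂sub.trans hS₁sub, ?_, ?_⟩
    · rw [card_insert_of_notMem hD, pow_succ]
      calc S.card ≤ Fintype.card C ^ 𝒟.card * S₁.card := hS₁card
        _ ≤ Fintype.card C ^ 𝒟.card * (Fintype.card C * S₂.card) :=
            Nat.mul_le_mul_left _ hS₂card
        _ = Fintype.card C ^ 𝒟.card * Fintype.card C * S₂.card := by ring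
    · intro D' hD' z hz w hw
      rcases mem_insert.mp hD' with rfl | hD'
      · exact hS₂ z hz w hw
      · exact hS₁ D' hD' z (hS₂sub hz) w (hS₂sub hw)

/-- Bound for the sequence-building lemma. -/
def ramB (r : ℕ) : ℕ → ℕ → ℕ
  | 0, _ => 1
  | j + 1, p => r ^ 2 ^ (p + 1) * ramB r j (p + 1) + 1

/-- Build an increasing "pre-homogeneous" sequence: the color of `insert z D`
for `D` among chosen elements depends only on `D`, provided `z` lies after `D`. -/
lemma buildSeq {C : Type} [DecidableEq C] [Fintype C] [Nonempty C]
    (χ : Finset ℕ → C) (d : ℕ) :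
    ∀ (j p : ℕ) (P S : Finset ℕ), P.card ≤ p →
      (∀ a ∈ P, ∀ b ∈ S, a < b) →
      (∀ D ∈ P.powersetCard d, ∀ z ∈ S, ∀ w ∈ S, χ (insert z D) = χ (insert w D)) →
      ramB (Fintype.card C) j p ≤ S.card →
      ∃ Q T : Finset ℕ, Q ⊆ S ∧ T ⊆ S ∧ Q.card = j ∧ T.Nonempty ∧
        (∀ a ∈ Q, ∀ b ∈ T, a < b) ∧
        ∀ D ∈ (P ∪ Q).powersetCard d, ∀ z w : ℕ,
          (z ∈ T ∨ (z ∈ Q ∧ ∀ x ∈ D, x < z)) →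
          (w ∈ T ∨ (w ∈ Q ∧ ∀ x ∈ D, x < w)) →
          χ (insert z D) = χ (insert w D) := by
  intro j
  induction j with
  | zero =>
    intro p P S _ _ hinv hcard
    refine ⟨∅, S, empty_subset _, Subset.rfl, card_empty, card_pos.mp hcard, by simp, ?_⟩
    intro D hD z w hz hw
    rw [union_empty] at hD
    have hz' : z ∈ S := by
      rcases hz with h | ⟨h, -⟩
      · exact h
      · simp at h
    have hw' : w ∈ S := by
      rcases hw with h | ⟨h, -⟩
      · exact h
      · simp at h
    exact hinv D hD z hz' w hw'
  | succ j IH =>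
    intro p P S hP hord hinv hcard
    have r1 : 1 ≤ Fintype.card C := Fintype.card_pos
    have hS : S.Nonempty := by
      rw [← card_pos]
      have : 1 ≤ ramB (Fintype.card C) (j + 1) p := by
        simp [ramB]
      omega
    set x := S.min' hS with hxdef
    have hxS : x ∈ S := S.min'_mem hS
    obtain ⟨S', hS'sub, hS'card, hS'const⟩ :=
      shrinkC χ ((insert x P).powersetCard d) (S.erase x)
    have hS'S : S' ⊆ S := hS'sub.trans (erase_subset _ _)
    have hxS' : ∀ b ∈ S', x < b := by
      intro b hb
      have hb' := hS'sub hb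
      have hbx : b ≠ x := (mem_erase.mp hb').1
      exact lt_of_le_of_ne (S.min'_le b (mem_of_mem_erase hb')) (Ne.symm hbx)
    -- cardinality chase
    have hDcard : ((insert x P).powersetCard d).card ≤ 2 ^ (p + 1) := by
      have h1 : (insert x P).powersetCard d ⊆ (insert x P).powerset := by
        intro D hD
        exact mem_powerset.mpr (mem_powersetCard.mp hD).1
      calc ((insert x P).powersetCard d).card ≤ ((insert x P).powerset).card :=
            card_le_card h1
        _ = 2 ^ (insert x P).card := card_powerset _
        _ ≤ 2 ^ (p + 1) := Nat.pow_le_pow_right (by norm_num)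
            ((card_insert_le _ _).trans (Nat.succ_le_succ hP))
    have hram : ramB (Fintype.card C) j (p + 1) ≤ S'.card := by
      have h1 : Fintype.card C ^ 2 ^ (p + 1) * ramB (Fintype.card C) j (p + 1) + 1
          ≤ S.card := hcard
      have h2 : (S.erase x).card = S.card - 1 := card_erase_of_mem hxS
      have h3 : Fintype.card C ^ ((insert x P).powersetCard d).card
          ≤ Fintype.card C ^ 2 ^ (p + 1) := Nat.pow_le_pow_right r1 hDcard
      have h4 : Fintype.card C ^ 2 ^ (p + 1) * ramB (Fintype.card C) j (p + 1)
          ≤ Fintype.card C ^ 2 ^ (p + 1) * S'.card := by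
        calc Fintype.card C ^ 2 ^ (p + 1) * ramB (Fintype.card C) j (p + 1)
            ≤ (S.erase x).card := by omega
          _ ≤ Fintype.card C ^ ((insert x P).powersetCard d).card * S'.card := hS'card
          _ ≤ Fintype.card C ^ 2 ^ (p + 1) * S'.card := Nat.mul_le_mul_right _ h3
      exact Nat.le_of_mul_le_mul_left h4 (Nat.pow_pos r1)
    have hordIH : ∀ a ∈ insert x P, ∀ b ∈ S', a < b := by
      intro a ha b hb
      rcases mem_insert.mp ha with rfl | ha
      · exact hxS' b hb
      · exact hord a ha b (hS'S hb)
    obtain ⟨Q', T, hQ'sub, hTsub, hQ'card, hTne, hQ'T, hJ⟩ :=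
      IH (p + 1) (insert x P) S' ((card_insert_le _ _).trans (Nat.succ_le_succ hP))
        hordIH hS'const hram
    have hxQ' : x ∉ Q' := by
      intro h
      exact lt_irrefl x (hxS' x (hQ'sub h))
    refine ⟨insert x Q', T, ?_, hTsub.trans hS'S, ?_, hTne, ?_, ?_⟩
    · intro y hy
      rcases mem_insert.mp hy with rfl | hy
      · exact hxS
      · exact hS'S (hQ'sub hy)
    · rw [card_insert_of_notMem hxQ', hQ'card]
    · intro a ha b hb
      rcases mem_insert.mp ha with rfl | ha
      · exact hxS' b (hTsub hb)
      · exact hQ'T a ha b hb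
    · intro D hD z w hz hw
      obtain ⟨hDsub, hDcard'⟩ := mem_powersetCard.mp hD
      have hset : P ∪ insert x Q' = insert x P ∪ Q' := by
        ext y
        simp only [mem_union, mem_insert]
        tauto
      -- if a condition holds at `x` then `D ⊆ P`
      have hDP : (∀ y ∈ D, y < x) → D ∈ P.powersetCard d := by
        intro hlt
        refine mem_powersetCard.mpr ⟨?_, hDcard'⟩
        intro y hy
        rcases mem_union.mp (hDsub hy) with h | h
        · exact h
        · rcases mem_insert.mp h with rfl | h
          · exact absurd (hlt _ hy) (lt_irrefl _)
          · exact absurd (hlt y hy) (not_lt.mpr (le_of_lt (hxS' y (hQ'sub h))))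
      have toS : ∀ u : ℕ, (u ∈ T ∨ (u ∈ insert x Q' ∧ ∀ y ∈ D, y < u)) → u ∈ S := by
        intro u hu
        rcases hu with h | ⟨h, -⟩
        · exact hS'S (hTsub h)
        · rcases mem_insert.mp h with rfl | h
          · exact hxS
          · exact hS'S (hQ'sub h)
      -- reduce each condition
      have hcases : ∀ u : ℕ, (u ∈ T ∨ (u ∈ insert x Q' ∧ ∀ y ∈ D, y < u)) →
          (u = x ∧ ∀ y ∈ D, y < x) ∨ (u ∈ T ∨ (u ∈ Q' ∧ ∀ y ∈ D, y < u)) := by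
        intro u hu
        rcases hu with h | ⟨h, hlt⟩
        · exact Or.inr (Or.inl h)
        · rcases mem_insert.mp h with rfl | h
          · exact Or.inl ⟨rfl, hlt⟩
          · exact Or.inr (Or.inr ⟨h, hlt⟩)
      have hDIH : D ∈ (insert x P ∪ Q').powersetCard d :=
        mem_powersetCard.mpr ⟨hset ▸ hDsub, hDcard'⟩
      rcases hcases z hz with ⟨rfl, hltz⟩ | hz'
      · rcases hcases w hw with ⟨rfl, -⟩ | hw'
        · rfl
        · exact hinv D (hDP hltz) x hxS w (toS w hw)
      · rcases hcases w hw with ⟨rfl, hltw⟩ | hw'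
        · exact (hinv D (hDP hltw) x hxS z (toS z hz)).symm
        · exact hJ D hDIH z w hz' hw'

/-- Finite hypergraph Ramsey theorem on `ℕ`. -/
theorem ramNat (d : ℕ) (C : Type) [DecidableEq C] [Fintype C] (m : ℕ) :
    ∃ n : ℕ, 1 ≤ n ∧ ∀ (S : Finset ℕ) (χ : Finset ℕ → C), n ≤ S.card →
      ∃ H, H ⊆ S ∧ H.card = m ∧ ∃ c0, ∀ T ⊆ H, T.card = d → χ T = c0 := by
  rcases isEmpty_or_nonempty C with hC | hC
  · exact ⟨1, le_refl 1, fun S χ _ => (hC.false (χ ∅)).elim⟩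
  induction d with
  | zero =>
    refine ⟨max m 1, le_max_right _ _, fun S χ hS => ?_⟩
    obtain ⟨H, hHS, hHcard⟩ := Finset.exists_subset_card_eq
      (le_trans (le_max_left m 1) hS)
    refine ⟨H, hHS, hHcard, χ ∅, fun T _ hT => ?_⟩
    rw [card_eq_zero.mp hT]
  | succ d IHd =>
    obtain ⟨N, -, hN⟩ := IHd
    set r := Fintype.card C with hrdef
    have r1 : 1 ≤ r := Fintype.card_pos
    refine ⟨max 1 (r * ramB r N 0), le_max_left _ _, fun S χ hS => ?_⟩
    -- pre-shrink to establish the initial invariant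
    obtain ⟨S₀, hS₀sub, hS₀card, hS₀⟩ := shrinkC χ ((∅ : Finset ℕ).powersetCard d) S
    have hram : ramB r N 0 ≤ S₀.card := by
      have h1 : ((∅ : Finset ℕ).powersetCard d).card ≤ 1 := by
        rw [card_powersetCard]
        cases d <;> simp [Nat.choose]
      have h2 : r ^ ((∅ : Finset ℕ).powersetCard d).card ≤ r := by
        calc r ^ ((∅ : Finset ℕ).powersetCard d).card ≤ r ^ 1 :=
              Nat.pow_le_pow_right r1 h1
          _ = r := pow_one r
      have h3 : r * ramB r N 0 ≤ r * S₀.card := by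
        calc r * ramB r N 0 ≤ S.card := le_trans (le_max_right _ _) hS
          _ ≤ r ^ ((∅ : Finset ℕ).powersetCard d).card * S₀.card := hS₀card
          _ ≤ r * S₀.card := Nat.mul_le_mul_right _ h2
      exact Nat.le_of_mul_le_mul_left h3 r1
    obtain ⟨Q, T, hQsub, hTsub, hQcard, hTne, -, hJ⟩ :=
      buildSeq χ d N 0 ∅ S₀ (by simp) (by simp) hS₀ hram
    obtain ⟨zstar, hzstar⟩ := hTne
    obtain ⟨H, hHQ, hHcard, c0, hom⟩ := hN Q (fun D => χ (insert zstar D)) hQcard.ge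
    refine ⟨H, hHQ.trans (hQsub.trans hS₀sub), hHcard, c0, fun T' hT'H hT'card => ?_⟩
    have hT'ne : T'.Nonempty := card_pos.mp (by omega)
    set y := T'.max' hT'ne with hydef
    have hyT' : y ∈ T' := T'.max'_mem hT'ne
    set D := T'.erase y with hDdef
    have hDcard : D.card = d := by
      rw [hDdef, card_erase_of_mem hyT', hT'card]
      omega
    have hDH : D ⊆ H := (erase_subset _ _).trans hT'H
    have hstep : χ T' = χ (insert y D) := by rw [hDdef, insert_erase hyT']
    rw [hstep]
    clear hstep
    have hmem : D ∈ ((∅ : Finset ℕ) ∪ Q).powersetCard d := by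
      rw [empty_union]
      exact mem_powersetCard.mpr ⟨hDH.trans hHQ, hDcard⟩
    have h1 : χ (insert y D) = χ (insert zstar D) := by
      refine hJ D hmem y zstar (Or.inr ⟨hHQ (hT'H hyT'), ?_⟩) (Or.inl hzstar)
      intro a ha
      have h2 := mem_erase.mp ha
      exact lt_of_le_of_ne (T'.le_max' a h2.2) h2.1
    rw [h1]
    exact hom D hDH hDcard

/-- Enumerate a nonempty finset by an initial segment of `ℕ`. -/
lemma exists_enum {α : Type} [DecidableEq α] (A : Finset α) (h : 0 < A.card) :
    ∃ f : ℕ → α, (∀ j, j < A.card → f j ∈ A) ∧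
      (∀ j1, j1 < A.card → ∀ j2, j2 < A.card → f j1 = f j2 → j1 = j2) ∧
      (∀ a ∈ A, ∃ j, j < A.card ∧ f j = a) := by
  set f : ℕ → α := fun j => if hj : j < A.card then (A.equivFin.symm ⟨j, hj⟩ : α)
    else (A.equivFin.symm ⟨0, h⟩ : α) with hfdef
  have hf : ∀ (j : ℕ) (hj : j < A.card), f j = (A.equivFin.symm ⟨j, hj⟩ : α) := by
    intro j hj
    rw [hfdef]
    exact dif_pos hj
  refine ⟨f, ?_, ?_, ?_⟩
  · intro j hj
    rw [hf j hj]
    exact (A.equivFin.symm _).2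
  · intro j1 h1 j2 h2 heq
    rw [hf j1 h1, hf j2 h2] at heq
    have := A.equivFin.symm.injective (Subtype.coe_injective heq)
    exact congrArg Fin.val this
  · intro a ha
    refine ⟨(A.equivFin ⟨a, ha⟩ : Fin A.card), (A.equivFin ⟨a, ha⟩).2, ?_⟩
    rw [hf _ (A.equivFin ⟨a, ha⟩).2]
    simp

/-- Splitting a union along a threshold by counting smaller elements. -/
lemma filter_lt_split {X Y : Finset ℕ} (h : ∀ x ∈ X, ∀ y ∈ Y, x < y) :
    ((X ∪ Y).filter (fun z => ((X ∪ Y).filter (· < z)).card < X.card) = X) ∧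
    ((X ∪ Y).filter (fun z => ¬ ((X ∪ Y).filter (· < z)).card < X.card) = Y) := by
  have hdisj : ∀ z, z ∈ X → z ∈ Y → False := fun z hz hz' => lt_irrefl z (h z hz z hz')
  have hX : ∀ z ∈ X, ((X ∪ Y).filter (· < z)).card < X.card := by
    intro z hz
    have hsub : (X ∪ Y).filter (· < z) ⊆ X.erase z := by
      intro w hw
      obtain ⟨hw1, hw2⟩ := mem_filter.mp hw
      rcases mem_union.mp hw1 with h1 | h1
      · exact mem_erase.mpr ⟨ne_of_lt hw2, h1⟩
      · exact absurd (h z hz w h1) (not_lt.mpr (le_of_lt hw2))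
    calc ((X ∪ Y).filter (· < z)).card ≤ (X.erase z).card := card_le_card hsub
      _ = X.card - 1 := card_erase_of_mem hz
      _ < X.card := by
          have : 0 < X.card := card_pos.mpr ⟨z, hz⟩
          omega
  have hY : ∀ z ∈ Y, ¬ ((X ∪ Y).filter (· < z)).card < X.card := by
    intro z hz
    have hsub : X ⊆ (X ∪ Y).filter (· < z) := by
      intro w hw
      exact mem_filter.mpr ⟨mem_union_left _ hw, h w hw z hz⟩
    exact not_lt.mpr (card_le_card hsub)
  constructor
  · ext z
    simp only [mem_filter, mem_union]
    constructor
    · rintro ⟨h1 | h1, h2⟩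
      · exact h1
      · exact absurd h2 (hY z h1)
    · intro hz
      exact ⟨Or.inl hz, hX z hz⟩
  · ext z
    simp only [mem_filter, mem_union]
    constructor
    · rintro ⟨h1 | h1, h2⟩
      · exact absurd (hX z h1) h2
      · exact h1
    · intro hz
      exact ⟨Or.inr hz, hY z hz⟩

theorem stmt3 (c d : ℕ) : ∀ k : ℕ, 1 ≤ k → ∃ n : ℕ, 1 ≤ n ∧
    ∀ (α : Type) [DecidableEq α] (A B : Finset α), Disjoint A B →
      A.card = n → B.card = n →
      ∀ χ : Finset α → Fin c,
        ∃ A' B' : Finset α, A' ⊆ A ∧ B' ⊆ B ∧ A'.card = k ∧ B'.card = k ∧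
          ∃ col : ℕ → Fin c, ∀ T : Finset α, T ⊆ A' ∪ B' → T.card = d →
            χ T = col (T ∩ A).card := by
  intro k hk
  obtain ⟨n, hn1, hn⟩ := ramNat d (Fin (d + 1) → Fin c) (2 * k)
  refine ⟨n, hn1, ?_⟩
  intro α _ A B hAB hA hB χ
  -- enumerations of A and B
  obtain ⟨f, hf1, hf2, hf3⟩ := exists_enum A (by omega)
  obtain ⟨g, hg1, hg2, hg3⟩ := exists_enum B (by omega)
  rw [hA] at hf1 hf2 hf3
  rw [hB] at hg1 hg2 hg3
  -- the induced coloring on `Finset ℕ`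
  set χ' : Finset ℕ → (Fin (d + 1) → Fin c) := fun Z i =>
    χ ((Z.filter (fun z => ((Z.filter (· < z)).card < (i : ℕ)))).image f ∪
       (Z.filter (fun z => ¬ ((Z.filter (· < z)).card < (i : ℕ)))).image g) with hχ'def
  obtain ⟨H, hHS, hHcard, c0, hom⟩ := hn (Finset.range n) χ' (by rw [card_range])
  have hHrange : ∀ z ∈ H, z < n := fun z hz => mem_range.mp (hHS hz)
  -- split H into lower and upper halves
  set L := H.sort (· ≤ ·) with hLdef
  have hLnd : L.Nodup := H.sort_nodup _
  have hLlen : L.length = 2 * k := by rw [hLdef, Finset.length_sort, hHcard]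
  set H₁ := (L.take k).toFinset with hH₁def
  set H₂ := (L.drop k).toFinset with hH₂def
  have hH₁card : H₁.card = k := by
    rw [hH₁def, List.card_toFinset, ((List.take_sublist k L).nodup hLnd).dedup,
      List.length_take, hLlen]
    omega
  have hH₂card : H₂.card = k := by
    rw [hH₂def, List.card_toFinset, ((List.drop_sublist k L).nodup hLnd).dedup,
      List.length_drop, hLlen]
    omega
  have hH₁H : H₁ ⊆ H := by
    intro z hz
    have := List.mem_toFinset.mp hz
    exact (Finset.mem_sort (· ≤ ·)).mp ((List.take_sublist k L).mem this)
  have hH₂H : H₂ ⊆ H := by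
    intro z hz
    have := List.mem_toFinset.mp hz
    exact (Finset.mem_sort (· ≤ ·)).mp ((List.drop_sublist k L).mem this)
  have horder : ∀ a ∈ H₁, ∀ b ∈ H₂, a < b := by
    have hsorted : L.Pairwise (· < ·) := H.sortedLT_sort.pairwise
    have := hsorted
    rw [← List.take_append_drop k L, List.pairwise_append] at this
    intro a ha b hb
    exact this.2.2 a (List.mem_toFinset.mp ha) b (List.mem_toFinset.mp hb)
  set A' := H₁.image f with hA'def
  set B' := H₂.image g with hB'def
  have hA'sub : A' ⊆ A := by
    intro a ha
    obtain ⟨j, hj, rfl⟩ := mem_image.mp ha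
    exact hf1 j (hHrange j (hH₁H hj))
  have hB'sub : B' ⊆ B := by
    intro b hb
    obtain ⟨j, hj, rfl⟩ := mem_image.mp hb
    exact hg1 j (hHrange j (hH₂H hj))
  have hfinjH₁ : Set.InjOn f H₁ := by
    intro j1 h1 j2 h2 heq
    exact hf2 j1 (hHrange j1 (hH₁H h1)) j2 (hHrange j2 (hH₁H h2)) heq
  have hginjH₂ : Set.InjOn g H₂ := by
    intro j1 h1 j2 h2 heq
    exact hg2 j1 (hHrange j1 (hH₂H h1)) j2 (hHrange j2 (hH₂H h2)) heq
  have hA'card : A'.card = k := by rw [hA'def, card_image_of_injOn hfinjH₁, hH₁card]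
  have hB'card : B'.card = k := by rw [hB'def, card_image_of_injOn hginjH₂, hH₂card]
  refine ⟨A', B', hA'sub, hB'sub, hA'card, hB'card, ?_⟩
  refine ⟨fun i => if hi : i < d + 1 then c0 ⟨i, hi⟩ else c0 ⟨0, Nat.succ_pos d⟩, ?_⟩
  intro T hT hTcard
  set TA := T ∩ A with hTAdef
  set TB := T \ A with hTBdef
  have hTAi : TA.card ≤ d := by
    calc TA.card ≤ T.card := card_le_card inter_subset_left
      _ = d := hTcard
  have hTAA' : TA ⊆ A' := by
    intro a ha
    obtain ⟨haT, haA⟩ := mem_inter.mp ha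
    rcases mem_union.mp (hT haT) with h1 | h1
    · exact h1
    · exact (Finset.disjoint_left.mp hAB haA (hB'sub h1)).elim
  have hTBB' : TB ⊆ B' := by
    intro b hb
    obtain ⟨hbT, hbA⟩ := mem_sdiff.mp hb
    rcases mem_union.mp (hT hbT) with h1 | h1
    · exact absurd (hA'sub h1) hbA
    · exact h1
  set X := H₁.filter (fun j => f j ∈ TA) with hXdef
  set Y := H₂.filter (fun j => g j ∈ TB) with hYdef
  have hXH₁ : X ⊆ H₁ := filter_subset _ _
  have hYH₂ : Y ⊆ H₂ := filter_subset _ _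
  have hXimg : X.image f = TA := by
    apply Finset.Subset.antisymm
    · intro a ha
      obtain ⟨j, hj, rfl⟩ := mem_image.mp ha
      exact (mem_filter.mp hj).2
    · intro a ha
      obtain ⟨j, hj, rfl⟩ := mem_image.mp (hTAA' ha)
      exact mem_image.mpr ⟨j, mem_filter.mpr ⟨hj, ha⟩, rfl⟩
  have hYimg : Y.image g = TB := by
    apply Finset.Subset.antisymm
    · intro b hb
      obtain ⟨j, hj, rfl⟩ := mem_image.mp hb
      exact (mem_filter.mp hj).2
    · intro b hb
      obtain ⟨j, hj, rfl⟩ := mem_image.mp (hTBB' hb)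
      exact mem_image.mpr ⟨j, mem_filter.mpr ⟨hj, hb⟩, rfl⟩
  have hXcard : X.card = TA.card := by
    rw [← hXimg, card_image_of_injOn (hfinjH₁.mono (by exact_mod_cast hXH₁))]
  have hYcard : Y.card = TB.card := by
    rw [← hYimg, card_image_of_injOn (hginjH₂.mono (by exact_mod_cast hYH₂))]
  have hXY : ∀ x ∈ X, ∀ y ∈ Y, x < y := fun x hx y hy => horder x (hXH₁ hx) y (hYH₂ hy)
  set Z := X ∪ Y with hZdef
  have hZH : Z ⊆ H := union_subset (hXH₁.trans hH₁H) (hYH₂.trans hH₂H)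
  have hZcard : Z.card = d := by
    rw [hZdef, card_union_of_disjoint]
    · rw [hXcard, hYcard, hTAdef, hTBdef, card_inter_add_card_sdiff T A, hTcard]
    · rw [Finset.disjoint_left]
      intro z hz hz'
      exact lt_irrefl z (hXY z hz z hz')
  have hhom := hom Z hZH hZcard
  have hi : TA.card < d + 1 := by omega
  have heval := congrFun hhom ⟨TA.card, hi⟩
  obtain ⟨hsplit1, hsplit2⟩ := filter_lt_split hXY
  rw [hXcard] at hsplit1 hsplit2
  have hTeq : TA ∪ TB = T := by
    rw [hTAdef, hTBdef, union_comm]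
    exact sdiff_union_inter T A
  rw [hχ'def] at heval
  dsimp only at heval
  rw [hZdef] at heval
  rw [hsplit1, hsplit2, hXimg, hYimg, hTeq] at heval
  rw [heval]
  show c0 ⟨TA.card, hi⟩ =
    if h : TA.card < d + 1 then c0 ⟨TA.card, h⟩ else c0 ⟨0, Nat.succ_pos d⟩
  rw [dif_pos hi]
end

section
/- Let A and B be disjoint countably infinite sets and let every d-element subset of A ∪ B be colored with one of c colors (c, d finite). Then for every k ≥ 1 there exist A' ⊆ A of size k, an infinite B' ⊆ B, and colors c_0, ..., c_d such that every d-element subset T of A' ∪ B' has color c_{|T ∩ A|}. -/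
open Set

/-- Dependent-choice style sequence builder. -/
lemma seq_rec_aux {Q O : Type*} (R : ℕ → Q → O → Q → Prop)
    (h : ∀ n q, ∃ o q', R n q o q') (q0 : Q) :
    ∃ (g : ℕ → Q) (o : ℕ → O), g 0 = q0 ∧ ∀ n, R n (g n) (o n) (g (n + 1)) := by
  choose o' g' hR using h
  refine ⟨fun n => Nat.rec q0 (fun n q => g' n q) n,
    fun n => o' n (Nat.rec q0 (fun n q => g' n q) n), rfl, fun n => hR n _⟩

/-- Infinite Ramsey theorem: any coloring of the `n`-subsets of an infinite set
with `c+1` colors has an infinite homogeneous subset. -/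
lemma ramsey_inf (c : ℕ) : ∀ (n : ℕ) {α : Type} (f : Finset α → Fin (c + 1))
    (S : Set α), S.Infinite →
    ∃ H, H ⊆ S ∧ H.Infinite ∧ ∃ r, ∀ U : Finset α, ↑U ⊆ H → U.card = n → f U = r := by
  intro n
  induction n with
  | zero =>
    intro α f S hS
    refine ⟨S, Subset.rfl, hS, f ∅, fun U _ hU => ?_⟩
    rw [Finset.card_eq_zero] at hU; rw [hU]
  | succ n ih =>
    intro α f S hS
    classical
    set Q := {C : Set α // C.Infinite ∧ C ⊆ S} with hQ
    set O := α × Fin (c + 1) with hO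
    have hstep : ∀ (m : ℕ) (q : Q), ∃ (o : O) (q' : Q),
        (q'.1 ⊆ q.1 ∧ o.1 ∈ q.1 ∧ o.1 ∉ q'.1 ∧
          ∀ U : Finset α, ↑U ⊆ q'.1 → U.card = n → f (insert o.1 U) = o.2) := by
      rintro m ⟨C, hCi, hCS⟩
      obtain ⟨a, ha⟩ := hCi.nonempty
      have hCd : (C \ {a}).Infinite := hCi.diff (Set.finite_singleton a)
      obtain ⟨H, hHsub, hHi, r, hr⟩ := ih (fun U => f (insert a U)) (C \ {a}) hCd
      refine ⟨(a, r), ⟨H, hHi, fun x hx => hCS (hHsub hx).1⟩,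
        fun x hx => (hHsub hx).1, ha, fun hc => (hHsub hc).2 rfl, hr⟩
    obtain ⟨g, o, hg0, hgR⟩ := seq_rec_aux _ hstep ⟨S, hS, Subset.rfl⟩
    set Cn : ℕ → Set α := fun m => (g m).1 with hCn
    set a : ℕ → α := fun m => (o m).1 with ha
    set r : ℕ → Fin (c + 1) := fun m => (o m).2 with hr
    have hmono : ∀ i j, i ≤ j → Cn j ⊆ Cn i := by
      intro i j hij
      induction j with
      | zero => simp_all
      | succ j ihj =>
        rcases Nat.lt_or_ge i (j + 1) with h | h
        · exact ((hgR j).1).trans (ihj (Nat.lt_succ_iff.mp h))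
        · have : i = j + 1 := le_antisymm hij h
          subst this; exact Subset.rfl
    have hmem : ∀ m, a m ∈ Cn m := fun m => (hgR m).2.1
    have hnotmem : ∀ m, a m ∉ Cn (m + 1) := fun m => (hgR m).2.2.1
    have hinj : ∀ i j, i < j → a i ≠ a j := by
      intro i j hij he
      exact hnotmem i (he ▸ hmono (i + 1) j hij (hmem j))
    -- pigeonhole on r
    obtain ⟨v, hv⟩ := Finite.exists_infinite_fiber r
    have hvI : (r ⁻¹' {v}).Infinite := Set.infinite_coe_iff.mp hv
    refine ⟨a '' (r ⁻¹' {v}), ?_, ?_, v, ?_⟩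
    · rintro x ⟨m, _, rfl⟩
      exact (g m).2.2 (hmem m)
    · refine hvI.image ?_
      intro i _ j _ he
      rcases lt_trichotomy i j with h | h | h
      · exact absurd he (hinj i j h)
      · exact h
      · exact absurd he.symm (hinj j i h)
    · intro U hU hUc
      have hUne : U.Nonempty := Finset.card_pos.mp (by omega)
      -- the set of indices appearing in U
      have hidx : {m | r m = v ∧ a m ∈ U}.Nonempty := by
        obtain ⟨x, hx⟩ := hUne
        obtain ⟨m, hm, rfl⟩ := hU hx
        exact ⟨m, hm, hx⟩
      set i0 := sInf {m | r m = v ∧ a m ∈ U} with hi0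
      obtain ⟨hri0, hai0⟩ := Nat.sInf_mem hidx
      set U' := U.erase (a i0) with hU'
      have hU'sub : ↑U' ⊆ Cn (i0 + 1) := by
        intro x hx
        have hx' : x ∈ U' := hx
        have hxU : x ∈ U := Finset.mem_of_mem_erase hx'
        have hxne : x ≠ a i0 := Finset.ne_of_mem_erase hx'
        obtain ⟨m, hm, rfl⟩ := hU hxU
        have hmge : i0 ≤ m := Nat.sInf_le ⟨hm, hxU⟩
        have hmne : m ≠ i0 := fun h => hxne (by rw [h])
        exact hmono (i0 + 1) m (by omega) (hmem m)
      have hins : insert (a i0) U' = U := Finset.insert_erase hai0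
      have hcard : U'.card = n := by
        have := Finset.card_erase_of_mem hai0
        rw [hU', this, hUc]
        omega
      calc f U = f (insert (a i0) U') := by rw [hins]
        _ = r i0 := (hgR i0).2.2.2 U' hU'sub hcard
        _ = v := hri0

/-- Iterated Ramsey: homogeneous for all sizes `≤ m` at once. -/
lemma ramsey_iter (c : ℕ) (m : ℕ) {α : Type} (f : Finset α → Fin (c + 1))
    (S : Set α) (hS : S.Infinite) :
    ∃ H, H ⊆ S ∧ H.Infinite ∧ ∃ col : ℕ → Fin (c + 1),
      ∀ i ≤ m, ∀ U : Finset α, ↑U ⊆ H → U.card = i → f U = col i := by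
  induction m with
  | zero =>
    obtain ⟨H, hHS, hHi, r, hr⟩ := ramsey_inf c 0 f S hS
    exact ⟨H, hHS, hHi, fun _ => r, fun i hi U hU hc => by
      interval_cases i; exact hr U hU hc⟩
  | succ m ihm =>
    obtain ⟨H1, hH1S, hH1i, col1, hcol1⟩ := ihm
    obtain ⟨H2, hH2S, hH2i, r, hr⟩ := ramsey_inf c (m + 1) f H1 hH1i
    refine ⟨H2, hH2S.trans hH1S, hH2i,
      fun i => if i = m + 1 then r else col1 i, fun i hi U hU hc => ?_⟩
    by_cases h : i = m + 1
    · subst h; simp only [if_pos rfl]; exact hr U hU hc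
    · simp only [if_neg h]
      exact hcol1 i (by omega) U (fun x hx => hH2S (hU hx)) hc

theorem stmt4 (c d : ℕ) (α : Type) (A B : Set α)
    (hAc : A.Countable) (hAi : A.Infinite)
    (hBc : B.Countable) (hBi : B.Infinite) (hAB : Disjoint A B)
    (χ : Finset α → Fin c) (k : ℕ) (hk : 1 ≤ k) :
    ∃ (A' : Finset α) (B' : Set α), ↑A' ⊆ A ∧ A'.card = k ∧ B' ⊆ B ∧ B'.Infinite ∧
      ∃ col : ℕ → Fin c, ∀ T : Finset α, ↑T ⊆ (↑A' : Set α) ∪ B' → T.card = d →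
        χ T = col (((T : Set α) ∩ A).ncard) := by
  classical
  obtain _ | c := c
  · exact (χ ∅).elim0
  -- enumerate the finite subsets of A
  obtain ⟨e, he⟩ := hAc.exists_eq_range hAi.nonempty
  obtain ⟨τ, hτ⟩ := exists_surjective_nat (Finset ℕ)
  set σ : ℕ → Finset α := fun n => (τ n).image e with hσ
  have hσA : ∀ n, ↑(σ n) ⊆ A := by
    intro n x hx
    simp only [hσ, Finset.coe_image, Set.mem_image] at hx
    obtain ⟨m, _, rfl⟩ := hx
    rw [he]; exact ⟨m, rfl⟩
  have hσsurj : ∀ S : Finset α, ↑S ⊆ A → ∃ n, σ n = S := by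
    intro S hS
    set inv : α → ℕ := fun x => if h : ∃ m, e m = x then h.choose else 0 with hinv
    have hinv' : ∀ x ∈ S, e (inv x) = x := by
      intro x hx
      have hxA := hS hx; rw [he] at hxA
      obtain ⟨m, hm⟩ := hxA
      have hex : ∃ m, e m = x := ⟨m, hm⟩
      simp only [hinv, dif_pos hex]
      exact hex.choose_spec
    obtain ⟨n, hn⟩ := hτ (S.image inv)
    refine ⟨n, ?_⟩
    rw [hσ]; simp only; rw [hn, Finset.image_image]
    calc S.image (e ∘ inv) = S.image id := Finset.image_congr fun x hx => hinv' x hx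
      _ = S := Finset.image_id
  -- diagonal construction on B
  set Q := {C : Set α // C.Infinite ∧ C ⊆ B} with hQ
  have hstep : ∀ (m : ℕ) (q : Q), ∃ (o : α × Fin (c + 1)) (q' : Q),
      (q'.1 ⊆ q.1 ∧ o.1 ∈ q.1 ∧ o.1 ∉ q'.1 ∧
        ∀ U : Finset α, ↑U ⊆ insert o.1 q'.1 → U.card = d - (σ m).card →
          χ (σ m ∪ U) = o.2) := by
    rintro m ⟨C, hCi, hCB⟩
    obtain ⟨D, hDC, hDi, r, hr⟩ :=
      ramsey_inf c (d - (σ m).card) (fun U => χ (σ m ∪ U)) C hCi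
    obtain ⟨b, hb⟩ := hDi.nonempty
    refine ⟨(b, r), ⟨D \ {b}, hDi.diff (Set.finite_singleton b),
      fun x hx => hCB (hDC hx.1)⟩, fun x hx => hDC hx.1, hDC hb,
      fun hc => hc.2 rfl, fun U hU hc => hr U ?_ hc⟩
    intro x hx
    rcases hU hx with h | h
    · exact h ▸ hb
    · exact h.1
  obtain ⟨g, o, hg0, hgR⟩ := seq_rec_aux _ hstep ⟨B, hBi, Subset.rfl⟩
  set Cn : ℕ → Set α := fun m => (g m).1 with hCn
  set bs : ℕ → α := fun m => (o m).1 with hbs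
  set ρ : ℕ → Fin (c + 1) := fun m => (o m).2 with hρ
  have hmono : ∀ i j, i ≤ j → Cn j ⊆ Cn i := by
    intro i j hij
    induction j with
    | zero => simp_all
    | succ j ihj =>
      rcases Nat.lt_or_ge i (j + 1) with h | h
      · exact ((hgR j).1).trans (ihj (Nat.lt_succ_iff.mp h))
      · have : i = j + 1 := le_antisymm hij h
        subst this; exact Subset.rfl
  have hmem : ∀ m, bs m ∈ Cn m := fun m => (hgR m).2.1
  have hnotmem : ∀ m, bs m ∉ Cn (m + 1) := fun m => (hgR m).2.2.1
  have hinj : ∀ i j, i < j → bs i ≠ bs j := by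
    intro i j hij he
    exact hnotmem i (he ▸ hmono (i + 1) j hij (hmem j))
  have hbsB : ∀ m, bs m ∈ B := fun m => (g m).2.2 (hmem m)
  have htail : ∀ i m, i ≤ m → bs m ∈ insert (bs i) (Cn (i + 1)) := by
    intro i m him
    rcases eq_or_lt_of_le him with h | h
    · subst h; exact Set.mem_insert _ _
    · exact Set.mem_insert_of_mem _ (hmono (i + 1) m h (hmem m))
  have hhom : ∀ m, ∀ U : Finset α, ↑U ⊆ insert (bs m) (Cn (m + 1)) →
      U.card = d - (σ m).card → χ (σ m ∪ U) = ρ m := fun m => (hgR m).2.2.2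
  -- define f on finite subsets of A and apply iterated Ramsey on A
  set nidx : Finset α → ℕ := fun S => if h : ∃ n, σ n = S then h.choose else 0
    with hnidx
  have hnidx' : ∀ S : Finset α, ↑S ⊆ A → σ (nidx S) = S := by
    intro S hS
    have h := hσsurj S hS
    simp only [hnidx, dif_pos h]
    exact h.choose_spec
  set f : Finset α → Fin (c + 1) := fun S => ρ (nidx S) with hf
  obtain ⟨Astar, hAstarA, hAstari, col, hcol⟩ := ramsey_iter c d f A hAi
  obtain ⟨A', hA'sub, hA'card⟩ := hAstari.exists_subset_card_eq k
  set N := A'.powerset.sup nidx with hN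
  refine ⟨A', bs '' {m | N ≤ m}, fun x hx => hAstarA (hA'sub hx), hA'card,
    ?_, ?_, col, ?_⟩
  · rintro x ⟨m, _, rfl⟩; exact hbsB m
  · refine (Set.Ici_infinite N).image ?_
    intro i _ j _ he
    rcases lt_trichotomy i j with h | h | h
    · exact absurd he (hinj i j h)
    · exact h
    · exact absurd he.symm (hinj j i h)
  · intro T hT hTcard
    set S := T ∩ A' with hS
    set U := T \ A' with hU
    have hSA' : S ⊆ A' := Finset.inter_subset_right
    have hSA : ↑S ⊆ A := fun x hx => hAstarA (hA'sub (hSA' hx))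
    have hUB' : ↑U ⊆ bs '' {m | N ≤ m} := by
      intro x hx
      have hx' : x ∈ U := hx
      rw [hU, Finset.mem_sdiff] at hx'
      rcases hT hx'.1 with h | h
      · exact absurd h hx'.2
      · exact h
    have hn0 : σ (nidx S) = S := hnidx' S hSA
    have hn0N : nidx S ≤ N := Finset.le_sup (Finset.mem_powerset.mpr hSA')
    have hUtail : ↑U ⊆ insert (bs (nidx S)) (Cn (nidx S + 1)) := by
      intro x hx
      obtain ⟨m, hm, rfl⟩ := hUB' hx
      exact htail _ m (le_trans hn0N hm)
    have hScard : S.card ≤ d := by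
      rw [← hTcard]; exact Finset.card_le_card Finset.inter_subset_left
    have hUcard : U.card = d - S.card := by
      have := Finset.card_sdiff_add_card_inter T A'
      rw [← hS, ← hU] at this; omega
    have hSU : S ∪ U = T := by
      rw [hS, hU, Finset.union_comm, Finset.sdiff_union_inter]
    have h1 : χ T = ρ (nidx S) := by
      rw [← hSU]
      have := hhom (nidx S) U hUtail (by rw [hUcard, hn0])
      rw [hn0] at this; exact this
    have h2 : f S = col S.card :=
      hcol S.card hScard S (fun x hx => hA'sub (hSA' hx)) rfl
    have h3 : (↑T ∩ A : Set α) = ↑S := by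
      rw [hS, Finset.coe_inter]
      ext x
      simp only [Set.mem_inter_iff, Finset.mem_coe]
      constructor
      · rintro ⟨hxT, hxA⟩
        refine ⟨hxT, ?_⟩
        rcases hT hxT with h | h
        · exact h
        · obtain ⟨m, _, rfl⟩ := h
          exact absurd hxA (Set.disjoint_right.mp hAB (hbsB m))
      · rintro ⟨hxT, hxA'⟩
        exact ⟨hxT, hSA (Finset.mem_coe.mpr (Finset.mem_inter.mpr ⟨hxT, hxA'⟩))⟩
    rw [h3, Set.ncard_coe_finset, h1]
    exact h2
end

section
/- Let A ⊆ ℝ be a finite arithmetic progression with |A| ≥ 2 and let d ≥ 1. Then k(A,d) := d + max_{1 ≤ s ≤ d} ⌊d/s⌋·(W(A,s) − s) equals |A|·d. -/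
/-- The von zur Gathen–Roche type parameter `W(A,d)`. -/
noncomputable def Wparam (A : Set ℝ) (d : ℕ) : ℕ :=
  sInf {W : ℕ | ∀ P : Polynomial ℝ, P.natDegree ≤ d →
    (∀ i : ℕ, i ≤ W → P.eval (i : ℝ) ∈ A) → ∃ r, P = Polynomial.C r}

/-- The junta threshold parameter `k(A,d) = d + max_{1 ≤ s ≤ d} ⌊d/s⌋·(W(A,s) − s)`. -/
noncomputable def kparam (A : Set ℝ) (d : ℕ) : ℕ :=
  d + (Finset.Icc 1 d).sup (fun s => (d / s) * (Wparam A s - s))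

open Polynomial in
/-- Pigeonhole: `A.card * s` is in the defining set of `Wparam ↑A s`. -/
lemma Wparam_mem (A : Finset ℝ) (s : ℕ) :
    (A.card * s) ∈ {W : ℕ | ∀ P : Polynomial ℝ, P.natDegree ≤ s →
      (∀ i : ℕ, i ≤ W → P.eval (i : ℝ) ∈ A) → ∃ r, P = Polynomial.C r} := by
  intro P hdeg hval
  classical
  have hmap : ∀ i ∈ Finset.range (A.card * s + 1), P.eval (i : ℝ) ∈ A := by
    intro i hi
    exact hval i (Nat.lt_succ_iff.mp (Finset.mem_range.mp hi))
  have hcard : A.card * s < (Finset.range (A.card * s + 1)).card := by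
    simp
  obtain ⟨y, -, hy⟩ :=
    Finset.exists_lt_card_fiber_of_mul_lt_card_of_maps_to hmap hcard
  refine ⟨y, ?_⟩
  by_contra hne
  have hPy : P - C y ≠ 0 := fun h => hne (by linear_combination (norm := ring_nf) h)
  set T : Finset ℕ := {x ∈ Finset.range (A.card * s + 1) | P.eval (x : ℝ) = y} with hT
  set Z : Finset ℝ := T.image (fun i : ℕ => (i : ℝ)) with hZ
  have hZcard : Z.card = T.card :=
    Finset.card_image_of_injective _ Nat.cast_injective
  have hsub : Z.val ⊆ (P - C y).roots := by
    intro x hx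
    rw [Polynomial.mem_roots hPy]
    simp only [hZ, Finset.mem_val, Finset.mem_image] at hx
    obtain ⟨i, hi, rfl⟩ := hx
    simp only [hT, Finset.mem_filter] at hi
    simp [Polynomial.IsRoot, hi.2]
  have := Polynomial.card_le_degree_of_subset_roots hsub
  have hdeg' : (P - C y).natDegree ≤ s :=
    le_trans (Polynomial.natDegree_sub_le _ _) (by simp [hdeg])
  omega

lemma Wparam_eq (a b : ℝ) (hb : b ≠ 0) (m : ℕ) (hm : 2 ≤ m)
    (A : Finset ℝ) (hA : A = (Finset.range m).image (fun i : ℕ => a + (i : ℝ) * b)) :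
    A.card = m ∧ Wparam ↑A 1 = m ∧ ∀ s, 1 ≤ s → Wparam ↑A s ≤ m * s := by
  have hinj : Function.Injective (fun i : ℕ => a + (i : ℝ) * b) := by
    intro i j hij
    simp only at hij
    have : (i : ℝ) = j := by
      field_simp at hij
      have h2 : ((i : ℝ) - j) * b = 0 := by linarith
      rcases mul_eq_zero.mp h2 with h | h
      · linarith
      · exact absurd h hb
    exact_mod_cast this
  have hcard : A.card = m := by
    rw [hA, Finset.card_image_of_injective _ hinj, Finset.card_range]
  -- upward-closedness isn't needed directly; compute bounds
  have hub : ∀ s, Wparam ↑A s ≤ m * s := by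
    intro s
    have := Wparam_mem A s
    rw [hcard] at this
    exact Nat.sInf_le this
  refine ⟨hcard, ?_, fun s _ => hub s⟩
  -- lower bound for s = 1 : the polynomial a + b X is a witness
  have hlb : m ≤ Wparam ↑A 1 := by
    by_contra hlt
    push_neg at hlt
    have hmem : Wparam ↑A 1 ∈ {W : ℕ | ∀ P : Polynomial ℝ, P.natDegree ≤ 1 →
        (∀ i : ℕ, i ≤ W → P.eval (i : ℝ) ∈ (A : Set ℝ)) → ∃ r, P = Polynomial.C r} := by
      apply Nat.sInf_mem
      exact ⟨A.card * 1, Wparam_mem A 1⟩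
    set P : Polynomial ℝ := Polynomial.C a + Polynomial.C b * Polynomial.X with hP
    have hdeg : P.natDegree ≤ 1 := by
      apply le_trans (Polynomial.natDegree_add_le _ _)
      simp [Polynomial.natDegree_C_mul hb]
    have hval : ∀ i : ℕ, i ≤ Wparam ↑A 1 → P.eval (i : ℝ) ∈ (A : Set ℝ) := by
      intro i hi
      have : i < m := lt_of_le_of_lt hi hlt
      refine Finset.mem_coe.mpr ?_
      rw [hA]
      exact Finset.mem_image.mpr ⟨i, Finset.mem_range.mpr this, by simp [hP]; ring⟩
    obtain ⟨r, hr⟩ := hmem P hdeg hval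
    have h0 : P.eval 0 = r := by rw [hr]; simp
    have h1 : P.eval 1 = r := by rw [hr]; simp
    simp [hP] at h0 h1
    exact hb (by linarith)
  have := hub 1
  omega

theorem stmt10 (a b : ℝ) (hb : b ≠ 0) (m : ℕ) (hm : 2 ≤ m)
    (A : Finset ℝ) (hA : A = (Finset.range m).image (fun i : ℕ => a + (i : ℝ) * b))
    (d : ℕ) (hd : 1 ≤ d) :
    kparam ↑A d = A.card * d := by
  obtain ⟨hcard, hW1, hWub⟩ := Wparam_eq a b hb m hm A hA
  rw [hcard]
  unfold kparam
  have hsup : (Finset.Icc 1 d).sup (fun s => (d / s) * (Wparam ↑A s - s)) = d * (m - 1) := by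
    apply le_antisymm
    · apply Finset.sup_le
      intro s hs
      obtain ⟨hs1, hsd⟩ := Finset.mem_Icc.mp hs
      have h1 : Wparam ↑A s - s ≤ (m - 1) * s := by
        have := hWub s hs1
        have hms : 1 ≤ m := by omega
        calc Wparam ↑A s - s ≤ m * s - s := by omega
          _ = (m - 1) * s := by rw [Nat.sub_mul, one_mul]
      calc (d / s) * (Wparam ↑A s - s) ≤ (d / s) * ((m - 1) * s) :=
            Nat.mul_le_mul_left _ h1
        _ = (d / s * s) * (m - 1) := by ring
        _ ≤ d * (m - 1) := Nat.mul_le_mul_right _ (Nat.div_mul_le_self d s)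
    · have h1 : (1 : ℕ) ∈ Finset.Icc 1 d := Finset.mem_Icc.mpr ⟨le_refl 1, hd⟩
      have := Finset.le_sup (f := fun s => (d / s) * (Wparam ↑A s - s)) h1
      simpa [hW1] using this
  rw [hsup]
  have : 1 ≤ m := by omega
  cases m with
  | zero => omega
  | succ n => simp [Nat.succ_sub_one]; ring
end

section
/- Let 1 ≤ k ≤ d, let a ≠ b be reals, let m ≥ k, and set n = 2km. Define f on the slice binom([n],k) by f(x) = a + (b−a)·Σ_{i=1}^m Π_{j=1}^k x_{(i−1)k+j}. Then f takes values only in {a,b}, is a polynomial of degree at most k ≤ d, and f is not an (m−1)-junta. -/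
/-- product of 0/1 indicators is an indicator of the conjunction -/
lemma prod_ind (x : ℕ → Bool) (s : Finset ℕ) :
    ∏ i ∈ s, (if x i = true then (1:ℝ) else 0) =
      if ∀ i ∈ s, x i = true then 1 else 0 := by
  split
  · exact Finset.prod_eq_one (fun i hi => by simp [*])
  · next h =>
    push_neg at h
    obtain ⟨i, hi, hx⟩ := h
    exact Finset.prod_eq_zero hi (by simp [hx])

lemma blocksub (k n i : ℕ) (hn : i*k+k ≤ n) (x : ℕ → Bool)
    (hC : ∀ j ∈ Finset.range k, x (i*k+j) = true) :
    Finset.Ico (i*k) (i*k+k) ⊆ (Finset.range n).filter (fun e => x e = true) := by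
  intro e he
  simp only [Finset.mem_Ico] at he
  simp only [Finset.mem_filter, Finset.mem_range]
  refine ⟨by omega, ?_⟩
  have := hC (e - i*k) (by simp only [Finset.mem_range]; omega)
  rwa [show i*k + (e - i*k) = e by omega] at this

/-- two full blocks in a slice point is impossible -/
lemma atmost (k n : ℕ) (hk : 1 ≤ k) (x : ℕ → Bool)
    (hx : ((Finset.range n).filter (fun e => x e = true)).card = k)
    (i1 i2 : ℕ) (h1n : i1*k+k ≤ n) (h2n : i2*k+k ≤ n) (hne : i1 ≠ i2)
    (hC1 : ∀ j ∈ Finset.range k, x (i1*k+j) = true)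
    (hC2 : ∀ j ∈ Finset.range k, x (i2*k+j) = true) : False := by
  have hsub : Finset.Ico (i1*k) (i1*k+k) ∪ Finset.Ico (i2*k) (i2*k+k) ⊆
      (Finset.range n).filter (fun e => x e = true) :=
    Finset.union_subset (blocksub k n i1 h1n x hC1) (blocksub k n i2 h2n x hC2)
  have hdisj : Disjoint (Finset.Ico (i1*k) (i1*k+k)) (Finset.Ico (i2*k) (i2*k+k)) := by
    rw [Finset.disjoint_left]
    intro e he1 he2
    simp only [Finset.mem_Ico] at he1 he2
    rcases Nat.lt_or_ge i1 i2 with h | h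
    · have : (i1+1)*k ≤ i2*k := Nat.mul_le_mul_right _ (by omega)
      nlinarith [he1.2, he2.1]
    · have hlt : i2 < i1 := by omega
      have : (i2+1)*k ≤ i1*k := Nat.mul_le_mul_right _ (by omega)
      nlinarith [he2.2, he1.1]
  have hcard := Finset.card_le_card hsub
  rw [Finset.card_union_of_disjoint hdisj, Nat.card_Ico, Nat.card_Ico, hx] at hcard
  omega

/-- value of the sum at a block indicator -/
lemma blocksum (k m i : ℕ) (hk : 1 ≤ k) (x : ℕ → Bool)
    (hx : ∀ e, x e = decide (i*k ≤ e ∧ e < i*k + k)) :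
    (∑ i' ∈ Finset.range m, ∏ j ∈ Finset.range k,
      (if x (i' * k + j) = true then (1:ℝ) else 0)) = if i < m then 1 else 0 := by
  have hterm : ∀ i' ∈ Finset.range m,
      (∏ j ∈ Finset.range k, (if x (i'*k+j) = true then (1:ℝ) else 0))
        = if i' = i then 1 else 0 := by
    intro i' _
    rcases eq_or_ne i' i with rfl | hne
    · rw [if_pos rfl]
      apply Finset.prod_eq_one
      intro j hj
      simp only [Finset.mem_range] at hj
      have hxt : x (i'*k+j) = true := by
        rw [hx, decide_eq_true_eq]; omega
      rw [hxt]; simp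
    · rw [if_neg hne]
      apply Finset.prod_eq_zero (Finset.mem_range.mpr (by omega : 0 < k))
      have hfalse : x (i'*k+0) = false := by
        rw [hx, decide_eq_false_iff_not]
        rintro ⟨h1, h2⟩
        have hle : i ≤ i' := Nat.le_of_mul_le_mul_right (by omega) hk
        have hlt : i' < i + 1 := by
          refine Nat.lt_of_mul_lt_mul_right (a := k) (show i'*k < (i+1)*k from ?_)
          have : (i+1)*k = i*k + k := by ring
          omega
        omega
      rw [hfalse]; simp
  rw [Finset.sum_congr rfl hterm, Finset.sum_ite_eq' (Finset.range m) i (fun _ => (1:ℝ))]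
  simp [Finset.mem_range]

/-- Membership in the slice `binom([n],k)`, with points encoded as `x : ℕ → Bool`
supported on the first `n` coordinates. -/
def onSlice (n k : ℕ) (x : ℕ → Bool) : Prop :=
  ((Finset.range n).filter (fun i => x i = true)).card = k ∧ ∀ i, n ≤ i → x i = false

/-- block indicator lies on the slice -/
lemma blockslice (k n i : ℕ) (hk : 1 ≤ k) (hn : i*k+k ≤ n) :
    onSlice n k (fun e => decide (i*k ≤ e ∧ e < i*k + k)) := by
  constructor
  · have heq : (Finset.range n).filter
        (fun e => (fun e => decide (i*k ≤ e ∧ e < i*k + k)) e = true)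
        = Finset.Ico (i*k) (i*k+k) := by
      ext e
      simp only [Finset.mem_filter, Finset.mem_range, Finset.mem_Ico, decide_eq_true_eq]
      omega
    rw [heq, Nat.card_Ico]; omega
  · intro e he
    simp only [decide_eq_false_iff_not]
    omega

theorem stmt12 (k d m : ℕ) (hk : 1 ≤ k) (hkd : k ≤ d) (hm : k ≤ m)
    (a b : ℝ) (hab : a ≠ b) (n : ℕ) (hn : n = 2 * k * m)
    (f : (ℕ → Bool) → ℝ)
    (hf : ∀ x, f x = a + (b - a) * ∑ i ∈ Finset.range m,
      ∏ j ∈ Finset.range k, (if x (i * k + j) = true then (1:ℝ) else 0)) :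
    (∀ x, onSlice n k x → f x ∈ ({a, b} : Set ℝ)) ∧
    (∃ c : Finset ℕ → ℝ, ∀ x, onSlice n k x →
      f x = ∑ S ∈ (Finset.range n).powerset.filter (fun S => S.card ≤ k),
        c S * ∏ i ∈ S, (if x i = true then (1:ℝ) else 0)) ∧
    ¬ ∃ K : Finset ℕ, K.card ≤ m - 1 ∧ ∀ x y, onSlice n k x → onSlice n k y →
      (∀ i ∈ K, x i = y i) → f x = f y := by
  have hm1 : 1 ≤ m := le_trans hk hm
  -- all blocks with index < 2*m fit inside range n
  have hblockn : ∀ i, i < 2*m → i*k + k ≤ n := by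
    intro i hi
    have h1 : (i+1)*k ≤ (2*m)*k := Nat.mul_le_mul_right _ (by omega)
    have h2 : (i+1)*k = i*k + k := by ring
    have h3 : (2*m)*k = n := by rw [hn]; ring
    omega
  refine ⟨?_, ?_, ?_⟩
  · -- Part 1: values in {a, b}
    intro x hx
    rw [hf x]
    by_cases hex : ∃ i ∈ Finset.range m, ∀ j ∈ Finset.range k, x (i*k+j) = true
    · obtain ⟨i₀, hi₀, hC₀⟩ := hex
      have hsum : (∑ i ∈ Finset.range m, ∏ j ∈ Finset.range k,
          (if x (i * k + j) = true then (1:ℝ) else 0)) = 1 := by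
        rw [Finset.sum_eq_single_of_mem i₀ hi₀ ?_]
        · rw [prod_ind, if_pos hC₀]
        · intro i hi hne
          rw [prod_ind (fun j => x (i*k+j)) (Finset.range k)]
          rw [if_neg]
          intro hC
          simp only [Finset.mem_range] at hi hi₀
          exact atmost k n hk x hx.1 i i₀ (hblockn i (by omega)) (hblockn i₀ (by omega))
            hne hC hC₀
      rw [hsum]
      right; simp
    · have hsum : (∑ i ∈ Finset.range m, ∏ j ∈ Finset.range k,
          (if x (i * k + j) = true then (1:ℝ) else 0)) = 0 := by
        apply Finset.sum_eq_zero
        intro i hi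
        rw [prod_ind (fun j => x (i*k+j)) (Finset.range k), if_neg]
        exact fun hC => hex ⟨i, hi, hC⟩
      rw [hsum]
      left; simp
  · -- Part 2: polynomial of degree ≤ k
    set T := (Finset.range n).powerset.filter (fun S => S.card ≤ k) with hT
    set B : ℕ → Finset ℕ := fun i => Finset.Ico (i*k) (i*k+k) with hB
    refine ⟨fun S => (if S = (∅:Finset ℕ) then a else 0)
      + (b-a) * (((Finset.range m).filter (fun i => B i = S)).card : ℝ), ?_⟩
    intro x _
    have hmaps : ∀ i ∈ Finset.range m, B i ∈ T := by
      intro i hi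
      simp only [Finset.mem_range] at hi
      simp only [hT, Finset.mem_filter, Finset.mem_powerset]
      constructor
      · intro e he
        simp only [hB, Finset.mem_Ico] at he
        have := hblockn i (by omega)
        simp only [Finset.mem_range]; omega
      · simp [hB, Nat.card_Ico]
    have hempty : (∅ : Finset ℕ) ∈ T := by
      simp [hT, Finset.empty_subset, Nat.zero_le, hk]
    rw [hf x]
    have hsplit : ∑ S ∈ T, ((if S = (∅:Finset ℕ) then a else 0)
        + (b-a) * (((Finset.range m).filter (fun i => B i = S)).card : ℝ))
          * ∏ e ∈ S, (if x e = true then (1:ℝ) else 0)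
        = (∑ S ∈ T, (if S = (∅:Finset ℕ) then a * ∏ e ∈ S, (if x e = true then (1:ℝ) else 0) else 0))
        + (b-a) * ∑ S ∈ T, (((Finset.range m).filter (fun i => B i = S)).card : ℝ)
            * ∏ e ∈ S, (if x e = true then (1:ℝ) else 0) := by
      rw [Finset.mul_sum, ← Finset.sum_add_distrib]
      apply Finset.sum_congr rfl
      intro S _
      rcases eq_or_ne S ∅ with rfl | hS
      · simp
      · simp only [if_neg hS, zero_add]
        ring
    rw [hsplit]
    rw [Finset.sum_ite_eq' T (∅:Finset ℕ)
      (fun S => a * ∏ e ∈ S, (if x e = true then (1:ℝ) else 0)), if_pos hempty]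
    simp only [Finset.prod_empty, mul_one]
    congr 1
    congr 1
    -- remaining: ∑ S in T, count S * P S = ∑ i in range m, ∏_{j<k} ind
    have hfib := Finset.sum_fiberwise_of_maps_to hmaps
      (fun i => ∏ e ∈ B i, (if x e = true then (1:ℝ) else 0))
    have hP : ∀ i, (∏ j ∈ Finset.range k, (if x (i*k+j) = true then (1:ℝ) else 0))
        = ∏ e ∈ B i, (if x e = true then (1:ℝ) else 0) := by
      intro i
      rw [hB, Finset.prod_Ico_eq_prod_range]
      simp only [Nat.add_sub_cancel_left]
    rw [Finset.sum_congr rfl (fun i _ => hP i), ← hfib]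
    apply Finset.sum_congr rfl
    intro S _
    have hc : ∀ i ∈ (Finset.range m).filter (fun i => B i = S),
        (∏ e ∈ B i, (if x e = true then (1:ℝ) else 0))
          = ∏ e ∈ S, (if x e = true then (1:ℝ) else 0) := by
      intro i hi
      rw [(Finset.mem_filter.mp hi).2]
    rw [Finset.sum_congr rfl hc, Finset.sum_const, nsmul_eq_mul]
  · -- Part 3: not an (m-1)-junta
    rintro ⟨K, hK, hinv⟩
    have pig : ∀ (s : Finset ℕ), m ≤ s.card → ∃ i ∈ s, ∀ e ∈ K, e / k ≠ i := by
      intro s hs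
      by_contra h
      push_neg at h
      have hsub : s ⊆ K.image (fun e => e / k) := by
        intro i hi
        obtain ⟨e, he, hq⟩ := h i hi
        exact Finset.mem_image.mpr ⟨e, he, hq⟩
      have h1 := Finset.card_le_card hsub
      have h2 := Finset.card_image_le (s := K) (f := fun e => e / k)
      omega
    obtain ⟨i1, hi1, hK1⟩ := pig (Finset.range m) (by simp)
    obtain ⟨i2, hi2, hK2⟩ := pig (Finset.Ico m (2*m)) (by simp [Nat.card_Ico]; omega)
    simp only [Finset.mem_range] at hi1
    simp only [Finset.mem_Ico] at hi2
    set x : ℕ → Bool := fun e => decide (i1*k ≤ e ∧ e < i1*k + k) with hxdef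
    set y : ℕ → Bool := fun e => decide (i2*k ≤ e ∧ e < i2*k + k) with hydef
    have hxs : onSlice n k x := blockslice k n i1 hk (hblockn i1 (by omega))
    have hys : onSlice n k y := blockslice k n i2 hk (hblockn i2 (by omega))
    have hagree : ∀ e ∈ K, x e = y e := by
      intro e he
      have hx0 : x e = false := by
        simp only [hxdef, decide_eq_false_iff_not]
        rintro ⟨h1, h2⟩
        exact hK1 e he (Nat.div_eq_of_lt_le h1 (by rw [Nat.succ_mul]; omega))
      have hy0 : y e = false := by
        simp only [hydef, decide_eq_false_iff_not]
        rintro ⟨h1, h2⟩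
        exact hK2 e he (Nat.div_eq_of_lt_le h1 (by rw [Nat.succ_mul]; omega))
      rw [hx0, hy0]
    have hfx : f x = b := by
      rw [hf x, blocksum k m i1 hk x (fun e => rfl), if_pos hi1]; ring
    have hfy : f y = a := by
      rw [hf y, blocksum k m i2 hk y (fun e => rfl), if_neg (by omega)]; ring
    have := hinv x y hxs hys hagree
    rw [hfx, hfy] at this
    exact hab this.symm
end

section
/- Let k ≥ d ≥ 1, let A ⊆ ℝ be finite, and fix n ≥ k + d. There exists a finite set 𝔠 ⊆ ℝ (depending only on A, d, k) such that: if f : binom([n],k) → A satisfies f(x) = Σ_{|S| = d} c(S)·x_S for real coefficients c(S), then every c(S) ∈ 𝔠. -/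
noncomputable section Aux

variable (d k : ℕ)

def cntA (j t : ℕ) : ℕ := if t ≤ j then (d - t).choose (j - t) else 0

def cntB (j t : ℕ) : ℕ := if d - t ≤ k - j then (k - (d - t)).choose (k - j - (d - t)) else 0

def Mat : Matrix (Fin (d+1)) (Fin (d+1)) ℝ := fun j t => (cntA d j t * cntB d k j t : ℕ)

lemma mat_tri : (Mat d k).BlockTriangular OrderDual.toDual := by
  intro i j h
  have : (i : ℕ) < j := h
  simp [Mat, cntA, Nat.not_le.mpr this]

lemma mat_diag_ne (hdk : d ≤ k) (t : Fin (d+1)) : Mat d k t t ≠ 0 := by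
  have ht : (t : ℕ) ≤ d := Nat.lt_succ_iff.mp t.isLt
  have h1 : cntA d t t = 1 := by simp [cntA]
  have h2 : 0 < cntB d k t t := by
    have hc : d - (t:ℕ) ≤ k - t := Nat.sub_le_sub_right hdk t
    have : k - (t:ℕ) - (d - t) ≤ k - (d - t) :=
      Nat.sub_le_sub_right (Nat.sub_le k t) _
    simp only [cntB, if_pos hc]
    exact Nat.choose_pos this
  simp only [Mat, h1, one_mul]
  exact_mod_cast h2.ne'

lemma mat_det_ne (hdk : d ≤ k) : (Mat d k).det ≠ 0 := by
  rw [Matrix.det_of_lowerTriangular _ (mat_tri d k)]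
  exact Finset.prod_ne_zero_iff.mpr fun t _ => mat_diag_ne d k hdk t

def mu : Fin (d+1) → ℝ := ((Mat d k).transpose)⁻¹.mulVec (Pi.single (Fin.last d) 1)

lemma mu_spec (hdk : d ≤ k) (t : Fin (d+1)) :
    ∑ j, Mat d k j t * mu d k j = if t = Fin.last d then 1 else 0 := by
  have hdet : ((Mat d k).transpose).det ≠ 0 := by
    rw [Matrix.det_transpose]; exact mat_det_ne d k hdk
  have h : ((Mat d k).transpose).mulVec (mu d k) = Pi.single (Fin.last d) 1 := by
    rw [mu, Matrix.mulVec_mulVec, Matrix.mul_nonsing_inv _ (isUnit_iff_ne_zero.mpr hdet),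
      Matrix.one_mulVec]
  have h2 := congrFun h t
  simp only [Matrix.mulVec, dotProduct, Matrix.transpose_apply, Pi.single_apply] at h2
  rw [← h2]

def mu' : ℕ → ℝ := fun j => if h : j < d + 1 then mu d k ⟨j, h⟩ else 0

end Aux

open Finset in
lemma count_supersets {ι : Type*} [DecidableEq ι] (Ω B : Finset ι) (hB : B ⊆ Ω) (r : ℕ)
    (hr : B.card ≤ r) :
    (((Ω.powersetCard r)).filter (fun J => B ⊆ J)).card
      = (Ω.card - B.card).choose (r - B.card) := by
  rw [← Finset.card_sdiff_of_subset hB, ← Finset.card_powersetCard]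
  apply Finset.card_bij (fun J _ => J \ B)
  · intro J hJ
    simp only [Finset.mem_filter, Finset.mem_powersetCard] at hJ
    rw [Finset.mem_powersetCard]
    exact ⟨Finset.sdiff_subset_sdiff hJ.1.1 le_rfl,
      by rw [Finset.card_sdiff_of_subset hJ.2, hJ.1.2]⟩
  · intro J₁ h₁ J₂ h₂ h
    simp only [Finset.mem_filter, Finset.mem_powersetCard] at h₁ h₂
    have e1 : J₁ = J₁ \ B ∪ B := by rw [Finset.sdiff_union_self_eq_union,
      Finset.union_eq_left.mpr h₁.2]
    have e2 : J₂ = J₂ \ B ∪ B := by rw [Finset.sdiff_union_self_eq_union,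
      Finset.union_eq_left.mpr h₂.2]
    rw [e1, e2, h]
  · intro K hK
    rw [Finset.mem_powersetCard] at hK
    refine ⟨K ∪ B, ?_, ?_⟩
    · simp only [Finset.mem_filter, Finset.mem_powersetCard]
      have hdisj : Disjoint K B := Finset.disjoint_of_subset_left hK.1 (Finset.sdiff_disjoint)
      refine ⟨⟨Finset.union_subset (hK.1.trans (Finset.sdiff_subset)) hB, ?_⟩,
        Finset.subset_union_right⟩
      rw [Finset.card_union_of_disjoint hdisj, hK.2]
      omega
    · have hdisj : Disjoint K B := Finset.disjoint_of_subset_left hK.1 (Finset.sdiff_disjoint)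
      rw [Finset.union_sdiff_cancel_right hdisj]


section Main

variable {n : ℕ}

def chi (U : Finset (Fin n)) : Fin n → Bool := fun i => decide (i ∈ U)

lemma wt_chi (U : Finset (Fin n)) : wt (chi U) = U.card := by
  unfold wt chi
  congr 1
  ext i
  simp

lemma prod_chi (U T : Finset (Fin n)) :
    (∏ i ∈ T, (if chi U i = true then (1:ℝ) else 0)) = if T ⊆ U then 1 else 0 := by
  unfold chi
  simp only [decide_eq_true_eq]
  rw [Finset.prod_boole]
  congr 1

end Main

theorem stmt16 (A : Finset ℝ) (d k : ℕ) (hd : 1 ≤ d) (hdk : d ≤ k) :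
    ∃ C : Finset ℝ, ∀ n : ℕ, k + d ≤ n →
      ∀ (f : (Fin n → Bool) → ℝ) (c : Finset (Fin n) → ℝ),
        (∀ x, wt x = k → f x ∈ (A : Set ℝ)) →
        (∀ x, wt x = k →
          f x = ∑ S ∈ Finset.univ.filter (fun S : Finset (Fin n) => S.card = d),
            c S * ∏ i ∈ S, (if x i = true then (1:ℝ) else 0)) →
        ∀ S : Finset (Fin n), S.card = d → c S ∈ C := by
  classical
  refine ⟨(Fintype.piFinset (fun _ : Finset (Fin d) × Finset (Fin k) => A)).image
    (fun a => ∑ q ∈ Finset.univ.filter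
        (fun q : Finset (Fin d) × Finset (Fin k) => q.1.card + q.2.card = k),
      mu' d k q.1.card * a q), ?_⟩
  intro n hn f c hA hrep S hS
  -- A is nonempty
  have hkn : k ≤ n := le_trans (Nat.le_add_right k d) hn
  have hx0 : ∃ x : Fin n → Bool, wt x = k := by
    refine ⟨chi (Finset.univ.filter (fun i : Fin n => (i : ℕ) < k)), ?_⟩
    rw [wt_chi]
    have : Finset.univ.filter (fun i : Fin n => (i : ℕ) < k)
        = (Finset.univ : Finset (Fin k)).map (Fin.castLEEmb hkn) := by
      ext i
      simp only [Finset.mem_filter, Finset.mem_univ, true_and, Finset.mem_map,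
        Fin.castLEEmb_apply]
      constructor
      · intro h; exact ⟨⟨i, h⟩, rfl⟩
      · rintro ⟨j, -, rfl⟩; exact j.isLt
    rw [this, Finset.card_map, Finset.card_univ, Fintype.card_fin]
  obtain ⟨x0, hx0⟩ := hx0
  obtain ⟨a0, ha0⟩ : ∃ a, a ∈ A := ⟨f x0, hA x0 hx0⟩
  -- choose W
  obtain ⟨W, hWc, hWk⟩ : ∃ W ⊆ Sᶜ, W.card = k := by
    apply Finset.exists_subset_card_eq
    rw [Finset.card_compl, hS]
    simp only [Fintype.card_fin]
    omega
  have hSW : Disjoint S W := by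
    rw [Finset.disjoint_right]
    intro a haW haS
    exact (Finset.mem_compl.mp (hWc haW)) haS
  -- the structured index set
  set D := (S.powerset ×ˢ W.powerset).filter
      (fun p : Finset (Fin n) × Finset (Fin n) => p.1.card + p.2.card = k) with hD
  -- step 1 : value of f at structured points
  have step1 : ∀ p ∈ D, f (chi (p.1 ∪ p.2)) =
      ∑ T ∈ Finset.univ.filter (fun T : Finset (Fin n) => T.card = d),
        c T * (if T ⊆ p.1 ∪ p.2 then 1 else 0) := by
    intro p hp
    simp only [hD, Finset.mem_filter, Finset.mem_product, Finset.mem_powerset] at hp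
    have hw : wt (chi (p.1 ∪ p.2)) = k := by
      rw [wt_chi, Finset.card_union_of_disjoint
        (Finset.disjoint_of_subset_left hp.1.1 (Finset.disjoint_of_subset_right hp.1.2 hSW)),
        hp.2]
    rw [hrep _ hw]
    exact Finset.sum_congr rfl (fun T _ => by rw [prod_chi])
  -- the key quantity
  set Key := ∑ p ∈ D, mu' d k p.1.card * f (chi (p.1 ∪ p.2)) with hKey
  have hw : ∀ T : Finset (Fin n), T.card = d →
      (∑ p ∈ D, mu' d k p.1.card * (if T ⊆ p.1 ∪ p.2 then (1:ℝ) else 0))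
        = if T = S then 1 else 0 := by
    intro T hT
    by_cases hTsub : T ⊆ S ∪ W
    · -- main case
      set t := (T ∩ S).card with ht
      have htT : T ∩ S ⊆ T := Finset.inter_subset_left
      have htd : t ≤ d := hT ▸ Finset.card_le_card htT
      have hdisjT : Disjoint (T ∩ S) (T ∩ W) :=
        hSW.mono Finset.inter_subset_right Finset.inter_subset_right
      have hTrec : (T ∩ S) ∪ (T ∩ W) = T := by
        rw [← Finset.inter_union_distrib_left]
        exact Finset.inter_eq_left.mpr hTsub
      have hsplit : t + (T ∩ W).card = d := by
        rw [ht, ← Finset.card_union_of_disjoint hdisjT, hTrec, hT]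
      have hmaps : ∀ p ∈ D, p.1.card ∈ Finset.range (d+1) := by
        intro p hp
        simp only [hD, Finset.mem_filter, Finset.mem_product, Finset.mem_powerset] at hp
        rw [Finset.mem_range, Nat.lt_succ_iff, ← hS]
        exact Finset.card_le_card hp.1.1
      rw [← Finset.sum_fiberwise_of_maps_to hmaps
        (fun p => mu' d k p.1.card * (if T ⊆ p.1 ∪ p.2 then (1:ℝ) else 0))]
      have hfiber : ∀ j ∈ Finset.range (d+1), D.filter (fun p => p.1.card = j)
          = (S.powersetCard j) ×ˢ (W.powersetCard (k - j)) := by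
        intro j hj
        rw [Finset.mem_range, Nat.lt_succ_iff] at hj
        ext p
        simp only [hD, Finset.mem_filter, Finset.mem_product, Finset.mem_powerset,
          Finset.mem_powersetCard]
        constructor
        · rintro ⟨⟨⟨h1, h2⟩, h3⟩, h4⟩
          exact ⟨⟨h1, h4⟩, h2, by omega⟩
        · rintro ⟨⟨h1, h4⟩, h2, h5⟩
          have hjk : j ≤ k := le_trans hj hdk
          exact ⟨⟨⟨h1, h2⟩, by omega⟩, h4⟩
      have hinner : ∀ j ∈ Finset.range (d+1),
          (∑ p ∈ D.filter (fun p => p.1.card = j),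
            mu' d k p.1.card * (if T ⊆ p.1 ∪ p.2 then (1:ℝ) else 0))
          = mu' d k j * ((cntA d j t * cntB d k j t : ℕ) : ℝ) := by
        intro j hj
        rw [hfiber j hj, Finset.sum_product]
        have hterm : ∀ J ∈ S.powersetCard j, ∀ V ∈ W.powersetCard (k - j),
            mu' d k J.card * (if T ⊆ J ∪ V then (1:ℝ) else 0)
            = mu' d k j * ((if T ∩ S ⊆ J then (1:ℝ) else 0)
                * (if T ∩ W ⊆ V then (1:ℝ) else 0)) := by
          intro J hJ V hV
          rw [Finset.mem_powersetCard] at hJ hV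
          have hiff : T ⊆ J ∪ V ↔ (T ∩ S ⊆ J ∧ T ∩ W ⊆ V) := by
            constructor
            · intro h
              constructor
              · intro i hi
                have hiS : i ∈ S := (Finset.mem_inter.mp hi).2
                have := h (Finset.mem_inter.mp hi).1
                rcases Finset.mem_union.mp this with h' | h'
                · exact h'
                · exact absurd hiS (Finset.disjoint_right.mp hSW (hV.1 h'))
              · intro i hi
                have hiW : i ∈ W := (Finset.mem_inter.mp hi).2
                have := h (Finset.mem_inter.mp hi).1
                rcases Finset.mem_union.mp this with h' | h'
                · exact absurd hiW (Finset.disjoint_left.mp hSW (hJ.1 h'))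
                · exact h'
            · rintro ⟨h1, h2⟩
              intro i hi
              have : i ∈ (T ∩ S) ∪ (T ∩ W) := by rw [hTrec]; exact hi
              rcases Finset.mem_union.mp this with h' | h'
              · exact Finset.mem_union_left _ (h1 h')
              · exact Finset.mem_union_right _ (h2 h')
          rw [hJ.2]
          simp only [hiff]
          by_cases h1 : T ∩ S ⊆ J <;> by_cases h2 : T ∩ W ⊆ V <;> simp [h1, h2]
        rw [Finset.sum_congr rfl (fun J hJ => Finset.sum_congr rfl (fun V hV => hterm J hJ V hV))]
        have hfact : (∑ J ∈ S.powersetCard j, ∑ V ∈ W.powersetCard (k - j),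
              mu' d k j * ((if T ∩ S ⊆ J then (1:ℝ) else 0) * (if T ∩ W ⊆ V then (1:ℝ) else 0)))
            = mu' d k j * ((∑ J ∈ S.powersetCard j, if T ∩ S ⊆ J then (1:ℝ) else 0)
              * (∑ V ∈ W.powersetCard (k - j), if T ∩ W ⊆ V then (1:ℝ) else 0)) := by
          rw [Finset.sum_mul_sum, Finset.mul_sum]
          exact Finset.sum_congr rfl fun J _ => by rw [Finset.mul_sum]
        rw [hfact, Finset.sum_boole, Finset.sum_boole]
        have hcntS : ((S.powersetCard j).filter (fun J => T ∩ S ⊆ J)).card = cntA d j t := by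
          by_cases hcase : t ≤ j
          · rw [count_supersets S (T ∩ S) Finset.inter_subset_right j hcase, hS, cntA,
              if_pos hcase]
          · rw [cntA, if_neg hcase]
            rw [Finset.card_eq_zero, Finset.filter_eq_empty_iff]
            intro J hJ hsub
            rw [Finset.mem_powersetCard] at hJ
            exact hcase (hJ.2 ▸ Finset.card_le_card hsub)
        have hcntW : ((W.powersetCard (k - j)).filter (fun V => T ∩ W ⊆ V)).card
            = cntB d k j t := by
          have hBW : (T ∩ W).card = d - t := by omega
          by_cases hcase : d - t ≤ k - j
          · rw [count_supersets W (T ∩ W) Finset.inter_subset_right (k - j)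
              (hBW ▸ hcase), hWk, hBW, cntB, if_pos hcase]
          · rw [cntB, if_neg hcase]
            rw [Finset.card_eq_zero, Finset.filter_eq_empty_iff]
            intro V hV hsub
            rw [Finset.mem_powersetCard] at hV
            exact hcase (hBW ▸ hV.2 ▸ Finset.card_le_card hsub)
        rw [hcntS, hcntW]
        push_cast
        ring
      rw [Finset.sum_congr rfl hinner]
      rw [← Fin.sum_univ_eq_sum_range (fun j => mu' d k j * ((cntA d j t * cntB d k j t : ℕ) : ℝ))]
      have htlt : t < d + 1 := Nat.lt_succ_of_le htd
      have hms := mu_spec d k hdk ⟨t, htlt⟩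
      have hsum : (∑ j : Fin (d+1), mu' d k (j : ℕ) * ((cntA d (j : ℕ) t * cntB d k (j : ℕ) t : ℕ) : ℝ))
          = ∑ j : Fin (d+1), Mat d k j ⟨t, htlt⟩ * mu d k j := by
        apply Finset.sum_congr rfl
        intro j _
        rw [mu', dif_pos j.isLt]
        simp only [Mat, Fin.eta]
        ring
      rw [hsum, hms]
      congr 1
      rw [eq_iff_iff]
      constructor
      · intro h
        have htd' : t = d := by
          have := congrArg Fin.val h
          simpa using this
        have h1 : T ∩ S = T := Finset.eq_of_subset_of_card_le htT (by omega)
        have h2 : T ⊆ S := h1 ▸ Finset.inter_subset_right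
        exact Finset.eq_of_subset_of_card_le h2 (by omega)
      · intro h
        have htd' : t = d := by rw [ht, h, Finset.inter_self, hS]
        exact Fin.ext (by simpa using htd')
    · -- degenerate case : T not inside S ∪ W
      have hTS : T ≠ S := fun h => hTsub (h ▸ Finset.subset_union_left)
      rw [if_neg hTS]
      apply Finset.sum_eq_zero
      intro p hp
      simp only [hD, Finset.mem_filter, Finset.mem_product, Finset.mem_powerset] at hp
      have : ¬ T ⊆ p.1 ∪ p.2 :=
        fun hsub => hTsub (hsub.trans (Finset.union_subset_union hp.1.1 hp.1.2))
      rw [if_neg this, mul_zero]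
  have goalA : Key = c S := by
    have hTset : S ∈ Finset.univ.filter (fun T : Finset (Fin n) => T.card = d) := by
      simp [hS]
    calc Key = ∑ p ∈ D, ∑ T ∈ Finset.univ.filter (fun T : Finset (Fin n) => T.card = d),
        mu' d k p.1.card * (c T * (if T ⊆ p.1 ∪ p.2 then (1:ℝ) else 0)) := by
          rw [hKey]
          exact Finset.sum_congr rfl (fun p hp => by rw [step1 p hp, Finset.mul_sum])
    _ = ∑ T ∈ Finset.univ.filter (fun T : Finset (Fin n) => T.card = d), ∑ p ∈ D,
        mu' d k p.1.card * (c T * (if T ⊆ p.1 ∪ p.2 then (1:ℝ) else 0)) := Finset.sum_comm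
    _ = ∑ T ∈ Finset.univ.filter (fun T : Finset (Fin n) => T.card = d),
        c T * ∑ p ∈ D, mu' d k p.1.card * (if T ⊆ p.1 ∪ p.2 then (1:ℝ) else 0) := by
          refine Finset.sum_congr rfl (fun T _ => ?_)
          rw [Finset.mul_sum]
          exact Finset.sum_congr rfl (fun p _ => by ring)
    _ = ∑ T ∈ Finset.univ.filter (fun T : Finset (Fin n) => T.card = d),
        (if T = S then c T else 0) := by
          refine Finset.sum_congr rfl (fun T hT => ?_)
          rw [hw T (by simpa using hT)]
          by_cases h : T = S <;> simp [h]
    _ = c S := by rw [Finset.sum_ite_eq' _ S c, if_pos hTset]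
  have goalB : Key ∈ (Fintype.piFinset (fun _ : Finset (Fin d) × Finset (Fin k) => A)).image
    (fun a => ∑ q ∈ Finset.univ.filter
        (fun q : Finset (Fin d) × Finset (Fin k) => q.1.card + q.2.card = k),
      mu' d k q.1.card * a q) := by
    have eS : {x // x ∈ S} ≃ Fin d :=
      Fintype.equivFinOfCardEq (by rw [Fintype.card_coe, hS])
    have eW : {x // x ∈ W} ≃ Fin k :=
      Fintype.equivFinOfCardEq (by rw [Fintype.card_coe, hWk])
    set bk1 : Finset (Fin d) → Finset (Fin n) :=
      fun q1 => (q1.map eS.symm.toEmbedding).map (Function.Embedding.subtype _) with hbk1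
    set bk2 : Finset (Fin k) → Finset (Fin n) :=
      fun q2 => (q2.map eW.symm.toEmbedding).map (Function.Embedding.subtype _) with hbk2
    set fw1 : Finset (Fin n) → Finset (Fin d) :=
      fun J => (J.subtype (· ∈ S)).map eS.toEmbedding with hfw1
    set fw2 : Finset (Fin n) → Finset (Fin k) :=
      fun V => (V.subtype (· ∈ W)).map eW.toEmbedding with hfw2
    have hbk1sub : ∀ q1, bk1 q1 ⊆ S := by
      intro q1 i hi
      exact Finset.property_of_mem_map_subtype _ hi
    have hbk2sub : ∀ q2, bk2 q2 ⊆ W := by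
      intro q2 i hi
      exact Finset.property_of_mem_map_subtype _ hi
    have hbk1card : ∀ q1, (bk1 q1).card = q1.card := by
      intro q1; rw [hbk1]; simp [Finset.card_map]
    have hbk2card : ∀ q2, (bk2 q2).card = q2.card := by
      intro q2; rw [hbk2]; simp [Finset.card_map]
    have hfw1card : ∀ J, J ⊆ S → (fw1 J).card = J.card := by
      intro J hJ
      rw [hfw1]
      simp only [Finset.card_map, Finset.card_subtype]
      rw [Finset.filter_true_of_mem (fun x hx => hJ hx)]
    have hfw2card : ∀ V, V ⊆ W → (fw2 V).card = V.card := by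
      intro V hV
      rw [hfw2]
      simp only [Finset.card_map, Finset.card_subtype]
      rw [Finset.filter_true_of_mem (fun x hx => hV hx)]
    have hleft1 : ∀ q1, fw1 (bk1 q1) = q1 := by
      intro q1
      ext z
      rw [hfw1, hbk1]
      simp only [Finset.mem_map, Finset.mem_subtype, Function.Embedding.coe_subtype,
        Equiv.coe_toEmbedding, Equiv.symm_apply_apply]
      constructor
      · rintro ⟨x, hx, rfl⟩
        obtain ⟨a, ⟨b, hb, rfl⟩, hax⟩ := hx
        have hbx : eS.symm b = x := Subtype.ext hax
        rw [← hbx, Equiv.apply_symm_apply]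
        exact hb
      · intro hz
        exact ⟨eS.symm z, ⟨eS.symm z, ⟨z, hz, rfl⟩, rfl⟩, Equiv.apply_symm_apply _ _⟩
    have hleft2 : ∀ q2, fw2 (bk2 q2) = q2 := by
      intro q2
      ext z
      rw [hfw2, hbk2]
      simp only [Finset.mem_map, Finset.mem_subtype, Function.Embedding.coe_subtype,
        Equiv.coe_toEmbedding, Equiv.symm_apply_apply]
      constructor
      · rintro ⟨x, hx, rfl⟩
        obtain ⟨a, ⟨b, hb, rfl⟩, hax⟩ := hx
        have hbx : eW.symm b = x := Subtype.ext hax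
        rw [← hbx, Equiv.apply_symm_apply]
        exact hb
      · intro hz
        exact ⟨eW.symm z, ⟨eW.symm z, ⟨z, hz, rfl⟩, rfl⟩, Equiv.apply_symm_apply _ _⟩
    have hright1 : ∀ J, J ⊆ S → bk1 (fw1 J) = J := by
      intro J hJ
      rw [hbk1, hfw1]
      simp only [Finset.map_map]
      have htr : ((Equiv.toEmbedding eS).trans (Equiv.toEmbedding eS.symm)).trans
          (Function.Embedding.subtype _) = Function.Embedding.subtype _ := by
        ext x
        simp
      rw [htr, Finset.subtype_map_of_mem (fun x hx => hJ hx)]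
    have hright2 : ∀ V, V ⊆ W → bk2 (fw2 V) = V := by
      intro V hV
      rw [hbk2, hfw2]
      simp only [Finset.map_map]
      have htr : ((Equiv.toEmbedding eW).trans (Equiv.toEmbedding eW.symm)).trans
          (Function.Embedding.subtype _) = Function.Embedding.subtype _ := by
        ext x
        simp
      rw [htr, Finset.subtype_map_of_mem (fun x hx => hV hx)]
    set a : (Finset (Fin d) × Finset (Fin k)) → ℝ := fun q =>
      if q.1.card + q.2.card = k then f (chi (bk1 q.1 ∪ bk2 q.2)) else a0 with ha
    have haA : a ∈ Fintype.piFinset (fun _ : Finset (Fin d) × Finset (Fin k) => A) := by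
      rw [Fintype.mem_piFinset]
      intro q
      simp only [ha]
      by_cases hq : q.1.card + q.2.card = k
      · rw [if_pos hq]
        apply hA
        rw [wt_chi, Finset.card_union_of_disjoint
          (hSW.mono (hbk1sub q.1) (hbk2sub q.2)), hbk1card, hbk2card, hq]
      · rw [if_neg hq]; exact ha0
    refine Finset.mem_image.mpr ⟨a, haA, ?_⟩
    rw [hKey]
    refine Finset.sum_nbij' (fun q => (bk1 q.1, bk2 q.2)) (fun p => (fw1 p.1, fw2 p.2))
      ?_ ?_ ?_ ?_ ?_
    · intro q hq
      simp only [Finset.mem_filter, Finset.mem_univ, true_and] at hq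
      simp only [hD, Finset.mem_filter, Finset.mem_product, Finset.mem_powerset]
      exact ⟨⟨hbk1sub q.1, hbk2sub q.2⟩, by rw [hbk1card, hbk2card]; exact hq⟩
    · intro p hp
      simp only [hD, Finset.mem_filter, Finset.mem_product, Finset.mem_powerset] at hp
      simp only [Finset.mem_filter, Finset.mem_univ, true_and]
      rw [hfw1card p.1 hp.1.1, hfw2card p.2 hp.1.2]
      exact hp.2
    · intro q hq
      exact Prod.ext (hleft1 q.1) (hleft2 q.2)
    · intro p hp
      simp only [hD, Finset.mem_filter, Finset.mem_product, Finset.mem_powerset] at hp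
      exact Prod.ext (hright1 p.1 hp.1.1) (hright2 p.2 hp.1.2)
    · intro q hq
      simp only [Finset.mem_filter, Finset.mem_univ, true_and] at hq
      simp only [ha, if_pos hq, hbk1card]
  rwa [goalA] at goalB
end

section
/- If k ≥ d and n ≥ k + d, then the representation of a degree-d function on the slice binom([n],k) as a linear combination of monomials x_S with |S| = d is unique: if Σ_{|S|=d} c_1(S) x_S = Σ_{|S|=d} c_2(S) x_S as functions on the slice, then c_1 = c_2. -/
/-- Coefficients of a left inverse of the inclusion matrix, defined by downward recursion. -/
noncomputable def Acoef (n k d : ℕ) : ℕ → ℝ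
  | m =>
    ((if m = 0 then (1:ℝ) else 0) -
      ∑ t ∈ (Finset.Icc 1 m).attach,
        (m.choose t.1 : ℝ) *
          (if d + t.1 ≤ k then ((n - d - m).choose (k - d - t.1) : ℝ) else 0) *
          Acoef n k d (m - t.1)) /
    ((n - d - m).choose (k - d))
termination_by m => m
decreasing_by
  have := Finset.mem_Icc.mp t.2; omega

lemma Acoef_eq (n k d : ℕ) (hdk : d ≤ k) (hn : k + d ≤ n) (m : ℕ) (hm : m ≤ d) :
    ∑ t ∈ Finset.range (m+1),
      (m.choose t : ℝ) *
        (if d + t ≤ k then ((n - d - m).choose (k - d - t) : ℝ) else 0) *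
        Acoef n k d (m - t)
    = if m = 0 then 1 else 0 := by
  have hle : k - d ≤ n - d - m := by omega
  have hC : ((n - d - m).choose (k - d) : ℝ) ≠ 0 :=
    Nat.cast_ne_zero.mpr (Nat.choose_pos hle).ne'
  rw [Finset.sum_range_succ']
  simp only [Nat.choose_zero_right, Nat.cast_one, one_mul, Nat.sub_zero, add_zero,
    if_pos hdk]
  rw [Acoef]
  rw [Finset.sum_attach (Finset.Icc 1 m)
    (fun t => (m.choose t : ℝ) *
      (if d + t ≤ k then ((n - d - m).choose (k - d - t) : ℝ) else 0) *
      Acoef n k d (m - t))]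
  rw [show Finset.Icc 1 m = Finset.Ico 1 (m+1) by rw [Finset.Ico_add_one_right_eq_Icc]]
  rw [Finset.sum_Ico_eq_sum_range]
  simp only [Nat.add_sub_cancel]
  have : ∀ i ∈ Finset.range m,
      (m.choose (1 + i) : ℝ) *
        (if d + (1 + i) ≤ k then ((n - d - m).choose (k - d - (1 + i)) : ℝ) else 0) *
        Acoef n k d (m - (1 + i))
      = (m.choose (i + 1) : ℝ) *
        (if d + (i + 1) ≤ k then ((n - d - m).choose (k - d - (i + 1)) : ℝ) else 0) *
        Acoef n k d (m - (i + 1)) := by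
    intro i _; rw [add_comm 1 i]
  rw [Finset.sum_congr rfl this]
  field_simp
  ring

lemma count_lemma_s17 (n k d : ℕ) (hdk : d ≤ k) (hn : k + d ≤ n) (S T : Finset (Fin n))
    (hS : S.card = d) (hT : T.card = d) :
    ∑ R ∈ Finset.univ.filter (fun R : Finset (Fin n) => R.card = k ∧ S ⊆ R),
      Acoef n k d (d - (T ∩ R).card)
    = if S = T then 1 else 0 := by
  have him : (S ∩ T).card ≤ d := hS ▸ Finset.card_le_card Finset.inter_subset_left
  set i := (S ∩ T).card with hidef
  set m := d - i with hmdef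
  have hTS : (T \ S).card = m := by
    have h1 := Finset.card_sdiff_add_card_inter T S
    rw [Finset.inter_comm] at h1
    omega
  rw [← Finset.sum_fiberwise_of_maps_to
    (g := fun R => R ∩ (T \ S)) (t := (T \ S).powerset)
    (fun R _ => Finset.mem_powerset.mpr Finset.inter_subset_right) _]
  have hfib : ∀ W ∈ (T \ S).powerset,
      ∑ R ∈ (Finset.univ.filter (fun R : Finset (Fin n) => R.card = k ∧ S ⊆ R)).filter
          (fun R => R ∩ (T \ S) = W),
        Acoef n k d (d - (T ∩ R).card)
      = (if d + W.card ≤ k then ((n - d - m).choose (k - d - W.card) : ℝ) else 0) *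
          Acoef n k d (m - W.card) := by
    intro W hW
    have hWsub : W ⊆ T \ S := Finset.mem_powerset.mp hW
    have hdisjW : Disjoint (S ∩ T) W := by
      refine Disjoint.mono Finset.inter_subset_left hWsub ?_
      exact Finset.disjoint_sdiff
    have hstep : ∀ R ∈ (Finset.univ.filter (fun R : Finset (Fin n) => R.card = k ∧ S ⊆ R)).filter
          (fun R => R ∩ (T \ S) = W),
        Acoef n k d (d - (T ∩ R).card) = Acoef n k d (m - W.card) := by
      intro R hR
      simp only [Finset.mem_filter, Finset.mem_univ, true_and] at hR
      obtain ⟨⟨hRk, hSR⟩, hRW⟩ := hR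
      have hTR : T ∩ R = (S ∩ T) ∪ (R ∩ (T \ S)) := by
        ext a
        simp only [Finset.mem_inter, Finset.mem_union, Finset.mem_sdiff]
        have := @hSR a
        tauto
      have hcard : (T ∩ R).card = i + W.card := by
        rw [hTR, hRW, Finset.card_union_of_disjoint (hRW ▸ hdisjW)]
      rw [hcard]
      congr 1
      omega
    rw [Finset.sum_congr rfl hstep, Finset.sum_const, nsmul_eq_mul]
    congr 1
    -- fiber cardinality
    by_cases hdW : d + W.card ≤ k
    · rw [if_pos hdW]
      have hST : (S ∪ T).card = d + m := by
        have := Finset.card_union_add_card_inter S T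
        omega
      have hcompl : (Finset.univ \ (S ∪ T)).card = n - d - m := by
        rw [Finset.card_sdiff_of_subset (Finset.subset_univ _), Finset.card_univ, Fintype.card_fin, hST]
        omega
      have hSW : (S ∪ W).card = d + W.card := by
        rw [Finset.card_union_of_disjoint]
        · omega
        · exact Finset.disjoint_sdiff.mono_right hWsub
      rw [show ((n - d - m).choose (k - d - W.card) : ℝ)
          = (((Finset.univ \ (S ∪ T)).powersetCard (k - d - W.card)).card : ℝ) by
        rw [Finset.card_powersetCard, hcompl]]
      norm_cast
      apply Finset.card_bij' (fun R _ => R \ (S ∪ T)) (fun V _ => S ∪ W ∪ V)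
      · intro R hR
        simp only [Finset.mem_filter, Finset.mem_univ, true_and] at hR
        obtain ⟨⟨hRk, hSR⟩, hRW⟩ := hR
        rw [Finset.mem_powersetCard]
        constructor
        · exact Finset.sdiff_subset_sdiff (Finset.subset_univ _) le_rfl
        · have hRint : R ∩ (S ∪ T) = S ∪ W := by
            ext a
            simp only [Finset.mem_inter, Finset.mem_union, ← hRW, Finset.mem_inter,
              Finset.mem_sdiff]
            have := @hSR a
            tauto
          have := Finset.card_sdiff_add_card_inter R (S ∪ T)
          rw [hRint, hSW] at this
          omega
      · intro V hV
        rw [Finset.mem_powersetCard] at hV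
        obtain ⟨hVsub, hVcard⟩ := hV
        have hVd : ∀ a ∈ V, a ∉ S ∪ T := fun a ha => (Finset.mem_sdiff.mp (hVsub ha)).2
        simp only [Finset.mem_filter, Finset.mem_univ, true_and]
        refine ⟨⟨?_, ?_⟩, ?_⟩
        · rw [Finset.card_union_of_disjoint, hSW, hVcard]
          · omega
          · rw [Finset.disjoint_right]
            intro a ha
            have := hVd a ha
            simp only [Finset.mem_union] at this ⊢
            intro hc
            rcases hc with hc | hc
            · exact this (Or.inl hc)
            · exact this (Or.inr (Finset.mem_sdiff.mp (hWsub hc)).1)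
        · exact Finset.subset_union_left.trans Finset.subset_union_left
        · ext a
          have h1 : a ∈ V → ¬(a ∈ S ∨ a ∈ T) := fun ha => by
            have := hVd a ha
            simpa [Finset.mem_union] using this
          have h2 : a ∈ W → a ∈ T ∧ a ∉ S := fun ha => Finset.mem_sdiff.mp (hWsub ha)
          simp only [Finset.mem_inter, Finset.mem_union, Finset.mem_sdiff]
          tauto
      · intro R hR
        simp only [Finset.mem_filter, Finset.mem_univ, true_and] at hR
        obtain ⟨⟨hRk, hSR⟩, hRW⟩ := hR
        ext a
        have h1 := @hSR a
        have h2 : a ∈ W ↔ a ∈ R ∧ a ∈ T ∧ a ∉ S := by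
          rw [← hRW]; simp [Finset.mem_inter, Finset.mem_sdiff]
        simp only [Finset.mem_union, Finset.mem_sdiff, h2]
        tauto
      · intro V hV
        rw [Finset.mem_powersetCard] at hV
        obtain ⟨hVsub, hVcard⟩ := hV
        ext a
        have h1 : a ∈ V → ¬(a ∈ S ∨ a ∈ T) := fun ha => by
          have := (Finset.mem_sdiff.mp (hVsub ha)).2
          simpa [Finset.mem_union] using this
        have h2 : a ∈ W → a ∈ T ∧ a ∉ S := fun ha => Finset.mem_sdiff.mp (hWsub ha)
        simp only [Finset.mem_union, Finset.mem_sdiff]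
        tauto
    · rw [if_neg hdW]
      norm_cast
      rw [Finset.card_eq_zero, Finset.eq_empty_iff_forall_notMem]
      intro R hR
      simp only [Finset.mem_filter, Finset.mem_univ, true_and] at hR
      obtain ⟨⟨hRk, hSR⟩, hRW⟩ := hR
      have hsub : S ∪ W ⊆ R := Finset.union_subset hSR (hRW ▸ Finset.inter_subset_left)
      have hSW : (S ∪ W).card = d + W.card := by
        rw [Finset.card_union_of_disjoint]
        · omega
        · exact Finset.disjoint_sdiff.mono_right hWsub
      have := Finset.card_le_card hsub
      omega
  rw [Finset.sum_congr rfl hfib, Finset.sum_powerset]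
  have hpc : ∀ j ∈ Finset.range ((T \ S).card + 1),
      ∑ W ∈ (T \ S).powersetCard j,
        (if d + W.card ≤ k then ((n - d - m).choose (k - d - W.card) : ℝ) else 0) *
          Acoef n k d (m - W.card)
      = (m.choose j : ℝ) *
          ((if d + j ≤ k then ((n - d - m).choose (k - d - j) : ℝ) else 0) *
            Acoef n k d (m - j)) := by
    intro j _
    have : ∀ W ∈ (T \ S).powersetCard j,
        (if d + W.card ≤ k then ((n - d - m).choose (k - d - W.card) : ℝ) else 0) *
          Acoef n k d (m - W.card)
        = (if d + j ≤ k then ((n - d - m).choose (k - d - j) : ℝ) else 0) *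
          Acoef n k d (m - j) := by
      intro W hW
      rw [(Finset.mem_powersetCard.mp hW).2]
    rw [Finset.sum_congr rfl this, Finset.sum_const, nsmul_eq_mul, Finset.card_powersetCard,
      hTS]
  rw [Finset.sum_congr rfl hpc, hTS]
  have hmain := Acoef_eq n k d hdk hn m (by omega)
  have : ∑ j ∈ Finset.range (m + 1),
      (m.choose j : ℝ) *
        ((if d + j ≤ k then ((n - d - m).choose (k - d - j) : ℝ) else 0) *
          Acoef n k d (m - j))
      = if m = 0 then 1 else 0 := by
    rw [← hmain]
    apply Finset.sum_congr rfl
    intro j _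
    ring
  rw [this]
  have hiff : m = 0 ↔ S = T := by
    constructor
    · intro hc
      have hiT : S ∩ T = S := Finset.eq_of_subset_of_card_le Finset.inter_subset_left
        (by omega)
      have hsub : S ⊆ T := hiT ▸ Finset.inter_subset_right
      exact Finset.eq_of_subset_of_card_le hsub (by omega)
    · intro hc
      subst hc
      have : i = d := by rw [hidef, Finset.inter_self, hS]
      omega
  simp only [hiff]

theorem stmt17 (n k d : ℕ) (hdk : d ≤ k) (hn : k + d ≤ n)
    (c₁ c₂ : Finset (Fin n) → ℝ)
    (h : ∀ x : Fin n → Bool, wt x = k →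
      ∑ S ∈ Finset.univ.filter (fun S : Finset (Fin n) => S.card = d),
        c₁ S * ∏ i ∈ S, (if x i = true then (1:ℝ) else 0)
      = ∑ S ∈ Finset.univ.filter (fun S : Finset (Fin n) => S.card = d),
        c₂ S * ∏ i ∈ S, (if x i = true then (1:ℝ) else 0)) :
    ∀ S : Finset (Fin n), S.card = d → c₁ S = c₂ S := by
  set g : Finset (Fin n) → ℝ := fun S => c₁ S - c₂ S with hgdef
  have hg : ∀ R : Finset (Fin n), R.card = k →
      ∑ S ∈ Finset.univ.filter (fun S : Finset (Fin n) => S.card = d),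
        (if S ⊆ R then g S else 0) = 0 := by
    intro R hRk
    have hx : wt (fun i => decide (i ∈ R)) = k := by
      rw [← hRk]
      unfold wt
      congr 1
      ext a
      simp
    have hprod : ∀ S : Finset (Fin n),
        (∏ i ∈ S, (if (fun i => decide (i ∈ R)) i = true then (1:ℝ) else 0))
        = if S ⊆ R then 1 else 0 := by
      intro S
      by_cases hsub : S ⊆ R
      · rw [if_pos hsub]
        apply Finset.prod_eq_one
        intro i hi
        simp [hsub hi]
      · rw [if_neg hsub]
        obtain ⟨a, haS, haR⟩ := Finset.not_subset.mp hsub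
        apply Finset.prod_eq_zero haS
        simp [haR]
    have := h (fun i => decide (i ∈ R)) hx
    simp only [hprod] at this
    have h2 : ∑ S ∈ Finset.univ.filter (fun S : Finset (Fin n) => S.card = d),
        (c₁ S * (if S ⊆ R then (1:ℝ) else 0) - c₂ S * (if S ⊆ R then (1:ℝ) else 0)) = 0 := by
      rw [Finset.sum_sub_distrib, this, sub_self]
    refine Eq.trans ?_ h2
    apply Finset.sum_congr rfl
    intro S _
    by_cases hsub : S ⊆ R <;> simp [hsub, hgdef]
  intro T hT
  have key : ∑ R ∈ Finset.univ.filter (fun R : Finset (Fin n) => R.card = k),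
      Acoef n k d (d - (T ∩ R).card) *
        (∑ S ∈ Finset.univ.filter (fun S : Finset (Fin n) => S.card = d),
          (if S ⊆ R then g S else 0)) = 0 := by
    apply Finset.sum_eq_zero
    intro R hR
    rw [hg R (Finset.mem_filter.mp hR).2, mul_zero]
  have expand : ∑ R ∈ Finset.univ.filter (fun R : Finset (Fin n) => R.card = k),
      Acoef n k d (d - (T ∩ R).card) *
        (∑ S ∈ Finset.univ.filter (fun S : Finset (Fin n) => S.card = d),
          (if S ⊆ R then g S else 0))
      = ∑ S ∈ Finset.univ.filter (fun S : Finset (Fin n) => S.card = d),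
          g S * (if S = T then 1 else 0) := by
    simp_rw [Finset.mul_sum]
    rw [Finset.sum_comm]
    apply Finset.sum_congr rfl
    intro S hS
    have hScard : S.card = d := (Finset.mem_filter.mp hS).2
    have step1 : ∀ R ∈ Finset.univ.filter (fun R : Finset (Fin n) => R.card = k),
        Acoef n k d (d - (T ∩ R).card) * (if S ⊆ R then g S else 0)
        = if S ⊆ R then Acoef n k d (d - (T ∩ R).card) * g S else 0 := by
      intro R _
      by_cases hsub : S ⊆ R <;> simp [hsub]
    rw [Finset.sum_congr rfl step1, ← Finset.sum_filter, Finset.filter_filter]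
    rw [← Finset.sum_mul, count_lemma_s17 n k d hdk hn S T hScard hT]
    ring
  rw [expand] at key
  have : ∑ S ∈ Finset.univ.filter (fun S : Finset (Fin n) => S.card = d),
      g S * (if S = T then 1 else 0)
      = g T := by
    have h1 : ∀ S ∈ Finset.univ.filter (fun S : Finset (Fin n) => S.card = d),
        g S * (if S = T then 1 else 0) = if S = T then g S else 0 := by
      intro S _
      by_cases hST : S = T <;> simp [hST]
    rw [Finset.sum_congr rfl h1,
      Finset.sum_ite_eq' (Finset.univ.filter (fun S : Finset (Fin n) => S.card = d)) T g]
    simp [hT]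
  rw [this] at key
  have := sub_eq_zero.mp key
  linarith [key]
end
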